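/- arXiv:2402.04795 — 5 statements merged into one kernel-verified Lean document; each statement's English description precedes it below -/
import Mathlib

section
/- Let ‖·‖ be an arbitrary norm on ℝ^d, let h > 0, and let x : [0,h] → ℝ^d be a twice continuously differentiable curve. Then for every τ ∈ [0,h], the distance, measured in the norm ‖·‖, from the point x(τ) to the line segment joining x(0) and x(h) is at most (h²/8)·max_{t∈[0,h]} ‖ẍ(t)‖. -/
open Set

section Taylor
variable {E : Type*} [NormedAddCommGroup E] [NormedSpace ℝ E]

/-- First-order Taylor bound (forward). -/
lemma taylor_fwd_aux {f f' f'' : ℝ → E} {a b M : ℝ} (hab : a ≤ b)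
    (hf : ∀ t ∈ Icc a b, HasDerivWithinAt f (f' t) (Icc a b) t)
    (hf' : ∀ t ∈ Icc a b, HasDerivWithinAt f' (f'' t) (Icc a b) t)
    (hM : ∀ t ∈ Icc a b, ‖f'' t‖ ≤ M) :
    ‖f b - f a - (b - a) • f' a‖ ≤ M * (b - a) ^ 2 / 2 := by
  set g : ℝ → E := fun t => f t - f a - (t - a) • f' a with hgdef
  have h1 : ∀ t ∈ Icc a b, HasDerivWithinAt (fun s : ℝ => (s - a) • f' a) (f' a) (Icc a b) t := by
    intro t ht
    have := ((hasDerivWithinAt_id t (Icc a b)).sub_const a).smul_const (f' a)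
    simpa using this
  have hg' : ∀ t ∈ Icc a b, HasDerivWithinAt g (f' t - f' a) (Icc a b) t := by
    intro t ht
    exact ((hf t ht).sub_const (f a)).sub (h1 t ht)
  have bnd : ∀ t ∈ Icc a b, ‖f' t - f' a‖ ≤ M * (t - a) := by
    intro t ht
    have := Convex.norm_image_sub_le_of_norm_hasDerivWithin_le hf' hM (convex_Icc a b)
      (left_mem_Icc.2 hab) ht
    rwa [Real.norm_eq_abs, abs_of_nonneg (sub_nonneg.2 ht.1)] at this
  have hB : ∀ s : ℝ, HasDerivAt (fun s : ℝ => M / 2 * (s - a) ^ 2) (M * (s - a)) s := by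
    intro s
    have h2 : HasDerivAt (fun s : ℝ => (s - a) ^ 2) (2 * (s - a)) s := by
      simpa using ((hasDerivAt_id s).sub_const a).fun_pow 2
    have := h2.const_mul (M / 2)
    rw [show M * (s - a) = M / 2 * (2 * (s - a)) by ring]
    exact this
  have hgc : ContinuousOn g (Icc a b) := fun t ht => (hg' t ht).continuousWithinAt
  have hIci : ∀ t ∈ Ico a b, HasDerivWithinAt g (f' t - f' a) (Ici t) t := fun t ht =>
    (hg' t (Ico_subset_Icc_self ht)).mono_of_mem_nhdsWithin (Icc_mem_nhdsGE_of_mem ht)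
  have ha0 : ‖g a‖ ≤ M / 2 * (a - a) ^ 2 := by simp [hgdef]
  have main := image_norm_le_of_norm_deriv_right_le_deriv_boundary hgc hIci ha0 hB
    (fun t ht => bnd t (Ico_subset_Icc_self ht)) (right_mem_Icc.2 hab)
  have hgb : g b = f b - f a - (b - a) • f' a := rfl
  calc ‖f b - f a - (b - a) • f' a‖ = ‖g b‖ := by rw [hgb]
    _ ≤ M / 2 * (b - a) ^ 2 := main
    _ = M * (b - a) ^ 2 / 2 := by ring

/-- First-order Taylor bound (backward). -/
lemma taylor_bwd_aux {f f' f'' : ℝ → E} {a b M : ℝ} (hab : a ≤ b)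
    (hf : ∀ t ∈ Icc a b, HasDerivWithinAt f (f' t) (Icc a b) t)
    (hf' : ∀ t ∈ Icc a b, HasDerivWithinAt f' (f'' t) (Icc a b) t)
    (hM : ∀ t ∈ Icc a b, ‖f'' t‖ ≤ M) :
    ‖f a - f b + (b - a) • f' b‖ ≤ M * (b - a) ^ 2 / 2 := by
  set σ : ℝ → ℝ := fun t => a + b - t with hσdef
  have hσmaps : MapsTo σ (Icc a b) (Icc a b) := fun t ht => by
    constructor
    · simp only [hσdef]; linarith [ht.2]
    · simp only [hσdef]; linarith [ht.1]
  have hσd : ∀ t, HasDerivWithinAt σ (-1) (Icc a b) t := by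
    intro t
    simpa using (hasDerivWithinAt_id t (Icc a b)).const_sub (a + b)
  have hF : ∀ t ∈ Icc a b, HasDerivWithinAt (f ∘ σ) ((-1 : ℝ) • f' (σ t)) (Icc a b) t :=
    fun t ht => HasDerivWithinAt.scomp t (hf (σ t) (hσmaps ht)) (hσd t) hσmaps
  have hF' : ∀ t ∈ Icc a b, HasDerivWithinAt (fun s => (-1 : ℝ) • f' (σ s))
      ((-1 : ℝ) • ((-1 : ℝ) • f'' (σ t))) (Icc a b) t := by
    intro t ht
    exact (HasDerivWithinAt.scomp t (hf' (σ t) (hσmaps ht)) (hσd t) hσmaps).const_smul (-1 : ℝ)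
  have hF'2 : ∀ t ∈ Icc a b, HasDerivWithinAt (fun s => (-1 : ℝ) • f' (σ s))
      (f'' (σ t)) (Icc a b) t := by
    intro t ht
    simpa using hF' t ht
  have hMF : ∀ t ∈ Icc a b, ‖f'' (σ t)‖ ≤ M := fun t ht => hM (σ t) (hσmaps ht)
  have key := taylor_fwd_aux hab hF hF'2 hMF
  have e1 : σ a = b := by simp [hσdef]
  have e2 : σ b = a := by simp [hσdef]
  have e3 : (f ∘ σ) b - (f ∘ σ) a - (b - a) • ((-1 : ℝ) • f' (σ a))
      = f a - f b + (b - a) • f' b := by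
    simp only [Function.comp_apply, Function.comp, e1, e2]
    module
  rwa [e3] at key

/-- Interpolation bound in a general real normed space. -/
lemma key_norm_aux {h M : ℝ} (hh : 0 < h) (x x' x'' : ℝ → E)
    (hx' : ∀ t ∈ Icc (0:ℝ) h, HasDerivWithinAt x (x' t) (Icc (0:ℝ) h) t)
    (hx'' : ∀ t ∈ Icc (0:ℝ) h, HasDerivWithinAt x' (x'' t) (Icc (0:ℝ) h) t)
    (hM : ∀ t ∈ Icc (0:ℝ) h, ‖x'' t‖ ≤ M)
    {τ : ℝ} (hτ : τ ∈ Icc (0:ℝ) h) :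
    ‖x τ - ((1 - τ / h) • x 0 + (τ / h) • x h)‖ ≤ h ^ 2 / 8 * M := by
  obtain ⟨hτ0, hτh⟩ := hτ
  have hM0 : 0 ≤ M := le_trans (norm_nonneg _) (hM 0 ⟨le_refl 0, hh.le⟩)
  have sub1 : Icc (0:ℝ) τ ⊆ Icc (0:ℝ) h := Icc_subset_Icc le_rfl hτh
  have sub2 : Icc τ h ⊆ Icc (0:ℝ) h := Icc_subset_Icc hτ0 le_rfl
  have R0bound : ‖x 0 - x τ + (τ - 0) • x' τ‖ ≤ M * (τ - 0) ^ 2 / 2 :=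
    taylor_bwd_aux hτ0 (fun t ht => (hx' t (sub1 ht)).mono sub1)
      (fun t ht => (hx'' t (sub1 ht)).mono sub1) (fun t ht => hM t (sub1 ht))
  have Rhbound : ‖x h - x τ - (h - τ) • x' τ‖ ≤ M * (h - τ) ^ 2 / 2 :=
    taylor_fwd_aux hτh (fun t ht => (hx' t (sub2 ht)).mono sub2)
      (fun t ht => (hx'' t (sub2 ht)).mono sub2) (fun t ht => hM t (sub2 ht))
  set θ := τ / h with hθdef
  have hθ0 : 0 ≤ θ := by rw [hθdef]; exact div_nonneg hτ0 hh.le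
  have hθ1 : θ ≤ 1 := by rw [hθdef]; exact (div_le_one hh).2 hτh
  have hθh : θ * h = τ := by rw [hθdef]; exact div_mul_cancel₀ τ hh.ne'
  rw [← hθh] at R0bound Rhbound ⊢
  have hid : x (θ * h) - ((1 - θ) • x 0 + θ • x h)
      = -((1 - θ) • (x 0 - x (θ * h) + (θ * h - 0) • x' (θ * h))
          + θ • (x h - x (θ * h) - (h - θ * h) • x' (θ * h))) := by
    module
  rw [hid, norm_neg]
  calc ‖(1 - θ) • (x 0 - x (θ * h) + (θ * h - 0) • x' (θ * h))
        + θ • (x h - x (θ * h) - (h - θ * h) • x' (θ * h))‖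
      ≤ ‖(1 - θ) • (x 0 - x (θ * h) + (θ * h - 0) • x' (θ * h))‖
        + ‖θ • (x h - x (θ * h) - (h - θ * h) • x' (θ * h))‖ := norm_add_le _ _
    _ = (1 - θ) * ‖x 0 - x (θ * h) + (θ * h - 0) • x' (θ * h)‖
        + θ * ‖x h - x (θ * h) - (h - θ * h) • x' (θ * h)‖ := by
        rw [norm_smul, norm_smul, Real.norm_eq_abs, Real.norm_eq_abs,
          abs_of_nonneg (by linarith), abs_of_nonneg hθ0]
    _ ≤ (1 - θ) * (M * (θ * h - 0) ^ 2 / 2) + θ * (M * (h - θ * h) ^ 2 / 2) :=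
        add_le_add (mul_le_mul_of_nonneg_left R0bound (by linarith))
          (mul_le_mul_of_nonneg_left Rhbound hθ0)
    _ ≤ h ^ 2 / 8 * M := by nlinarith [mul_nonneg hM0 (sq_nonneg (h * (1 - 2 * θ))), sq_nonneg h]

end Taylor

/-- Type synonym for `Fin d → ℝ` carrying the norm `N`. -/
def WithNormAux (d : ℕ) (N : (Fin d → ℝ) → ℝ) : Type := Fin d → ℝ

instance (d : ℕ) (N : (Fin d → ℝ) → ℝ) : AddCommGroup (WithNormAux d N) :=
  inferInstanceAs (AddCommGroup (Fin d → ℝ))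

noncomputable instance (d : ℕ) (N : (Fin d → ℝ) → ℝ) : Module ℝ (WithNormAux d N) :=
  inferInstanceAs (Module ℝ (Fin d → ℝ))

instance (d : ℕ) (N : (Fin d → ℝ) → ℝ) : Norm (WithNormAux d N) := ⟨N⟩

/-- `N` is a norm on `ℝ^d`: subadditive, absolutely homogeneous, and definite. -/
def IsNorm {d : ℕ} (N : (Fin d → ℝ) → ℝ) : Prop :=
  (∀ x y, N (x + y) ≤ N x + N y) ∧
  (∀ (c : ℝ) (x), N (c • x) = |c| * N x) ∧
  (∀ x, N x = 0 → x = 0)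

/-- **Lemma 1.** Let `‖·‖` be an arbitrary norm on `ℝ^d` and `x : [0,h] → ℝ^d` a twice
continuously differentiable curve. Then for every `τ ∈ [0,h]`, the distance (in the norm `N`)
from the point `x τ` to the segment joining `x 0` and `x h` is at most
`(h²/8) · max_{t ∈ [0,h]} N (ẍ t)`. -/
theorem dist_to_segment_le {d : ℕ} (N : (Fin d → ℝ) → ℝ) (hN : IsNorm N)
    (h : ℝ) (hh : 0 < h) (x x' x'' : ℝ → (Fin d → ℝ))
    (hx' : ∀ t ∈ Set.Icc (0 : ℝ) h, HasDerivWithinAt x (x' t) (Set.Icc (0 : ℝ) h) t)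
    (hx'' : ∀ t ∈ Set.Icc (0 : ℝ) h, HasDerivWithinAt x' (x'' t) (Set.Icc (0 : ℝ) h) t)
    (hcont : ContinuousOn x'' (Set.Icc (0 : ℝ) h)) :
    ∀ τ ∈ Set.Icc (0 : ℝ) h,
      sInf {r : ℝ | ∃ y ∈ segment ℝ (x 0) (x h), r = N (x τ - y)} ≤
        h ^ 2 / 8 * sSup {r : ℝ | ∃ t ∈ Set.Icc (0 : ℝ) h, r = N (x'' t)} := by
  obtain ⟨hN1, hN2, hN3⟩ := hN
  intro τ hτ
  have hN0 : N 0 = 0 := by simpa using hN2 0 0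
  have hNnonneg : ∀ v, 0 ≤ N v := by
    intro v
    have hneg : N (-v) = N v := by simpa using hN2 (-1) v
    have h2 : N 0 ≤ N v + N (-v) := by simpa using hN1 v (-v)
    rw [hN0, hneg] at h2; linarith
  have core : NormedSpace.Core ℝ (WithNormAux d N) :=
    { norm_nonneg := hNnonneg
      norm_smul := fun c v => by rw [Real.norm_eq_abs]; exact hN2 c v
      norm_triangle := hN1
      norm_eq_zero_iff := fun v => ⟨hN3 v, fun hv => by rw [hv]; exact hN0⟩ }
  letI : NormedAddCommGroup (WithNormAux d N) := NormedAddCommGroup.ofCore core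
  letI : NormedSpace ℝ (WithNormAux d N) := NormedSpace.ofCore core
  let e : (Fin d → ℝ) ≃ₗ[ℝ] (WithNormAux d N) :=
    { toFun := fun v => v, map_add' := fun _ _ => rfl, map_smul' := fun _ _ => rfl,
      invFun := fun v => v, left_inv := fun _ => rfl, right_inv := fun _ => rfl }
  let ec : (Fin d → ℝ) ≃L[ℝ] (WithNormAux d N) := e.toContinuousLinearEquiv
  -- the supremum bound
  set M := sSup {r : ℝ | ∃ t ∈ Set.Icc (0 : ℝ) h, r = N (x'' t)} with hMdef
  have hNcont : Continuous N := by
    have h1 : Continuous fun v : Fin d → ℝ => ‖ec v‖ := continuous_norm.comp ec.continuous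
    exact h1
  have hSeq : {r : ℝ | ∃ t ∈ Set.Icc (0 : ℝ) h, r = N (x'' t)}
      = (fun t => N (x'' t)) '' Set.Icc (0 : ℝ) h := by
    ext r; simp [eq_comm]
  have hbdd : BddAbove {r : ℝ | ∃ t ∈ Set.Icc (0 : ℝ) h, r = N (x'' t)} := by
    rw [hSeq]
    exact (isCompact_Icc.image_of_continuousOn (hNcont.comp_continuousOn hcont)).bddAbove
  have hMb : ∀ t ∈ Set.Icc (0 : ℝ) h, N (x'' t) ≤ M := fun t ht =>
    le_csSup hbdd ⟨t, ht, rfl⟩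
  -- transfer to the normed space
  let X : ℝ → WithNormAux d N := fun t => ec (x t)
  let X' : ℝ → WithNormAux d N := fun t => ec (x' t)
  let X'' : ℝ → WithNormAux d N := fun t => ec (x'' t)
  have hX' : ∀ t ∈ Set.Icc (0 : ℝ) h, HasDerivWithinAt X (X' t) (Set.Icc (0 : ℝ) h) t :=
    fun t ht => (ec : (Fin d → ℝ) →L[ℝ] WithNormAux d N).hasFDerivAt.comp_hasDerivWithinAt t
      (hx' t ht)
  have hX'' : ∀ t ∈ Set.Icc (0 : ℝ) h, HasDerivWithinAt X' (X'' t) (Set.Icc (0 : ℝ) h) t :=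
    fun t ht => (ec : (Fin d → ℝ) →L[ℝ] WithNormAux d N).hasFDerivAt.comp_hasDerivWithinAt t
      (hx'' t ht)
  have hMX : ∀ t ∈ Set.Icc (0 : ℝ) h, ‖X'' t‖ ≤ M := fun t ht => hMb t ht
  have key := key_norm_aux hh X X' X'' hX' hX'' hMX hτ
  -- the candidate point on the segment
  set y : Fin d → ℝ := (1 - τ / h) • x 0 + (τ / h) • x h with hydef
  have hτ0 := hτ.1
  have hτh := hτ.2
  have hy : y ∈ segment ℝ (x 0) (x h) := by
    refine ⟨1 - τ / h, τ / h, ?_, div_nonneg hτ0 hh.le, by ring, rfl⟩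
    have : τ / h ≤ 1 := (div_le_one hh).2 hτh
    linarith
  have hNle : N (x τ - y) ≤ h ^ 2 / 8 * M := by
    have heq : ‖X τ - ((1 - τ / h) • X 0 + (τ / h) • X h)‖ = N (x τ - y) := rfl
    rw [← heq]
    exact key
  refine le_trans (csInf_le ⟨0, ?_⟩ ⟨y, hy, rfl⟩) hNle
  rintro r ⟨y', _, rfl⟩
  exact hNnonneg _
end

section
/- Let ‖·‖ be an arbitrary norm on ℝ^d, let A be a d×d real matrix, and let h be a real number with 0 < h and h²·‖A²‖ < 8. Let x(t) = e^{tA} x₀ for some x₀ ∈ ℝ^d (so x solves ẋ = Ax). Then for every τ ∈ [0,h], ‖x(τ)‖ ≤ (1 − (h²/8)‖A²‖)^{−1} · max{‖x(0)‖, ‖x(h)‖}. -/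
/-- The operator norm of the matrix `M`, induced by the norm `N` on `ℝ^d`:
`sup { N (M x) : N x ≤ 1 }`. -/
noncomputable def opNorm {d : ℕ} (N : (Fin d → ℝ) → ℝ) (M : Matrix (Fin d) (Fin d) ℝ) : ℝ :=
  sSup {r : ℝ | ∃ x, N x ≤ 1 ∧ r = N (M.mulVec x)}

open NormedSpace MeasureTheory

section lemmas

variable {d : ℕ} {N : (Fin d → ℝ) → ℝ}

lemma IsNorm.zero' (hN : IsNorm N) : N 0 = 0 := by
  have := hN.2.1 0 0
  simpa using this

lemma IsNorm.neg' (hN : IsNorm N) (x : Fin d → ℝ) : N (-x) = N x := by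
  have := hN.2.1 (-1) x
  simpa using this

lemma IsNorm.nonneg' (hN : IsNorm N) (x : Fin d → ℝ) : 0 ≤ N x := by
  have h1 : N (x + (-x)) ≤ N x + N (-x) := hN.1 x (-x)
  rw [add_neg_cancel, hN.zero', hN.neg'] at h1
  linarith

lemma IsNorm.sub_le' (hN : IsNorm N) (x y : Fin d → ℝ) : N (x - y) ≤ N x + N y := by
  have := hN.1 x (-y)
  simpa [sub_eq_add_neg, hN.neg'] using this

lemma IsNorm.sum_le' (hN : IsNorm N) {ι : Type*} (s : Finset ι) (f : ι → (Fin d → ℝ)) :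
    N (∑ i ∈ s, f i) ≤ ∑ i ∈ s, N (f i) := by
  classical
  induction s using Finset.cons_induction with
  | empty => simp [hN.zero']
  | cons a s ha ih =>
      rw [Finset.sum_cons, Finset.sum_cons]
      exact (hN.1 _ _).trans (by linarith)

lemma IsNorm.exists_upper (hN : IsNorm N) : ∃ C : ℝ, 0 ≤ C ∧ ∀ z, N z ≤ C * ‖z‖ := by
  classical
  set e : Fin d → (Fin d → ℝ) := fun i => fun j => if i = j then (1 : ℝ) else 0 with he
  refine ⟨∑ i, N (e i), Finset.sum_nonneg fun i _ => hN.nonneg' _, fun z => ?_⟩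
  have hz : z = ∑ i, z i • e i := pi_eq_sum_univ z
  calc N z = N (∑ i, z i • e i) := by rw [← hz]
    _ ≤ ∑ i, N (z i • e i) := hN.sum_le' _ _
    _ ≤ ∑ i, ‖z‖ * N (e i) := by
        refine Finset.sum_le_sum fun i _ => ?_
        rw [hN.2.1]
        have h1 : |z i| ≤ ‖z‖ := by
          simpa using norm_le_pi_norm z i
        exact mul_le_mul_of_nonneg_right h1 (hN.nonneg' _) |>.trans
          (le_of_eq rfl)
    _ = (∑ i, N (e i)) * ‖z‖ := by
        rw [Finset.sum_mul]
        exact Finset.sum_congr rfl fun i _ => mul_comm _ _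

lemma IsNorm.continuous' (hN : IsNorm N) : Continuous N := by
  obtain ⟨C, hC0, hC⟩ := hN.exists_upper
  have key : ∀ x y : Fin d → ℝ, |N x - N y| ≤ C * ‖x - y‖ := by
    intro x y
    rw [abs_sub_le_iff]
    constructor
    · have h1 : N x ≤ N y + N (x - y) := by
        have := hN.1 y (x - y); simpa using this
      have := hC (x - y); linarith
    · have h1 : N y ≤ N x + N (y - x) := by
        have := hN.1 x (y - x); simpa using this
      have h2 := hC (y - x)
      rw [norm_sub_rev] at h2
      linarith
  have : LipschitzWith (Real.toNNReal C) N := by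
    refine LipschitzWith.of_dist_le_mul fun x y => ?_
    rw [Real.dist_eq, dist_eq_norm]
    calc |N x - N y| ≤ C * ‖x - y‖ := key x y
      _ ≤ (Real.toNNReal C : ℝ) * ‖x - y‖ := by
          gcongr
          exact (Real.coe_toNNReal C hC0).ge
  exact this.continuous

lemma IsNorm.exists_lower (hN : IsNorm N) : ∃ c : ℝ, 0 < c ∧ ∀ z, ‖z‖ ≤ c * N z := by
  rcases Nat.eq_zero_or_pos d with hd | hd
  · refine ⟨1, one_pos, fun z => ?_⟩
    subst hd
    have hz : z = 0 := funext fun i => i.elim0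
    rw [hz, hN.zero', norm_zero]
    norm_num
  · haveI : Nonempty (Fin d) := ⟨⟨0, hd⟩⟩
    have hsph : (Metric.sphere (0 : Fin d → ℝ) 1).Nonempty :=
      NormedSpace.sphere_nonempty.2 zero_le_one
    obtain ⟨z₀, hz₀, hmin⟩ := (isCompact_sphere (0 : Fin d → ℝ) 1).exists_isMinOn hsph
      hN.continuous'.continuousOn
    have hz₀norm : ‖z₀‖ = 1 := mem_sphere_zero_iff_norm.1 hz₀
    have hz₀ne : z₀ ≠ 0 := by
      intro h; rw [h, norm_zero] at hz₀norm; exact one_ne_zero hz₀norm.symm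
    have hm : 0 < N z₀ := by
      rcases (hN.nonneg' z₀).lt_or_eq with h | h
      · exact h
      · exact absurd (hN.2.2 z₀ h.symm) hz₀ne
    refine ⟨(N z₀)⁻¹, inv_pos.2 hm, fun z => ?_⟩
    rcases eq_or_ne z 0 with rfl | hz
    · simp [hN.zero']
    · have hznorm : 0 < ‖z‖ := norm_pos_iff.2 hz
      have hw : ‖z‖⁻¹ • z ∈ Metric.sphere (0 : Fin d → ℝ) 1 := by
        simp [norm_smul, abs_of_pos (inv_pos.2 hznorm), inv_mul_cancel₀ hznorm.ne']
      have h1 : N z₀ ≤ N (‖z‖⁻¹ • z) := hmin hw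
      rw [hN.2.1, abs_of_pos (inv_pos.2 hznorm)] at h1
      have h2 : ‖z‖ * N z₀ ≤ N z := by
        have h3 := mul_le_mul_of_nonneg_left h1 hznorm.le
        rwa [← mul_assoc, mul_inv_cancel₀ hznorm.ne', one_mul] at h3
      rw [inv_mul_eq_div, le_div_iff₀ hm]
      linarith [h2]

lemma IsNorm.opNorm_bddAbove (hN : IsNorm N) (M : Matrix (Fin d) (Fin d) ℝ) :
    BddAbove {r : ℝ | ∃ x, N x ≤ 1 ∧ r = N (M.mulVec x)} := by
  obtain ⟨C, hC0, hC⟩ := hN.exists_upper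
  obtain ⟨c, hc0, hc⟩ := hN.exists_lower
  set L : (Fin d → ℝ) →L[ℝ] (Fin d → ℝ) := LinearMap.toContinuousLinearMap M.mulVecLin
  refine ⟨C * ‖L‖ * c, fun r hr => ?_⟩
  obtain ⟨x, hx1, rfl⟩ := hr
  have h1 : N (M.mulVec x) ≤ C * ‖M.mulVec x‖ := hC _
  have h2 : ‖M.mulVec x‖ ≤ ‖L‖ * ‖x‖ := by
    have := L.le_opNorm x
    simpa [L, Matrix.mulVecLin_apply] using this
  have h3 : ‖x‖ ≤ c * N x := hc x
  have h4 : N x ≤ 1 := hx1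
  have hL : 0 ≤ ‖L‖ := norm_nonneg _
  calc N (M.mulVec x) ≤ C * ‖M.mulVec x‖ := h1
    _ ≤ C * (‖L‖ * ‖x‖) := mul_le_mul_of_nonneg_left h2 hC0
    _ ≤ C * (‖L‖ * (c * N x)) :=
        mul_le_mul_of_nonneg_left (mul_le_mul_of_nonneg_left h3 hL) hC0
    _ ≤ C * (‖L‖ * (c * 1)) :=
        mul_le_mul_of_nonneg_left
          (mul_le_mul_of_nonneg_left (mul_le_mul_of_nonneg_left h4 hc0.le) hL) hC0
    _ = C * ‖L‖ * c := by ring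

lemma IsNorm.opNorm_nonneg (hN : IsNorm N) (M : Matrix (Fin d) (Fin d) ℝ) :
    0 ≤ opNorm N M := by
  have h0 : (0 : ℝ) ∈ {r : ℝ | ∃ x, N x ≤ 1 ∧ r = N (M.mulVec x)} :=
    ⟨0, by simp [hN.zero'], by simp [Matrix.mulVec_zero, hN.zero']⟩
  exact le_csSup (hN.opNorm_bddAbove M) h0

lemma IsNorm.mulVec_le (hN : IsNorm N) (M : Matrix (Fin d) (Fin d) ℝ) (v : Fin d → ℝ) :
    N (M.mulVec v) ≤ opNorm N M * N v := by
  rcases eq_or_ne v 0 with rfl | hv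
  · simp [Matrix.mulVec_zero, hN.zero']
  · have hNv : 0 < N v := by
      rcases (hN.nonneg' v).lt_or_eq with h | h
      · exact h
      · exact absurd (hN.2.2 v h.symm) hv
    have hmem : N (M.mulVec ((N v)⁻¹ • v)) ∈ {r : ℝ | ∃ x, N x ≤ 1 ∧ r = N (M.mulVec x)} := by
      refine ⟨(N v)⁻¹ • v, ?_, rfl⟩
      rw [hN.2.1, abs_of_pos (inv_pos.2 hNv), inv_mul_cancel₀ hNv.ne']
    have h1 : N (M.mulVec ((N v)⁻¹ • v)) ≤ opNorm N M := le_csSup (hN.opNorm_bddAbove M) hmem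
    rw [Matrix.mulVec_smul, hN.2.1, abs_of_pos (inv_pos.2 hNv)] at h1
    calc N (M.mulVec v) = N v * ((N v)⁻¹ * N (M.mulVec v)) := by
          rw [← mul_assoc, mul_inv_cancel₀ hNv.ne', one_mul]
      _ ≤ N v * opNorm N M := mul_le_mul_of_nonneg_left h1 hNv.le
      _ = opNorm N M * N v := mul_comm _ _

/-- Jensen's inequality for the norm `N` and interval integrals. -/
lemma IsNorm.intervalIntegral_le (hN : IsNorm N) {f : ℝ → (Fin d → ℝ)} (hf : Continuous f)
    {a b : ℝ} (hab : a ≤ b) :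
    N (∫ t in a..b, f t) ≤ ∫ t in a..b, N (f t) := by
  rcases hab.lt_or_eq with hab' | rfl
  swap
  · simp [hN.zero']
  set μ := volume.restrict (Set.Ioc a b) with hμ
  have hμuniv : μ Set.univ = ENNReal.ofReal (b - a) := by
    rw [hμ, Measure.restrict_apply_univ, Real.volume_Ioc]
  haveI : IsFiniteMeasure μ := ⟨by rw [hμuniv]; exact ENNReal.ofReal_lt_top⟩
  haveI : NeZero μ := by
    refine ⟨fun h0 => ?_⟩
    rw [h0] at hμuniv
    simp only [Measure.coe_zero, Pi.zero_apply] at hμuniv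
    have : (0:ℝ) < b - a := by linarith
    rw [eq_comm, ENNReal.ofReal_eq_zero] at hμuniv
    linarith
  have hconv : ConvexOn ℝ Set.univ N := by
    refine ⟨convex_univ, fun x _ y _ p q hp hq hpq => ?_⟩
    calc N (p • x + q • y) ≤ N (p • x) + N (q • y) := hN.1 _ _
      _ = p * N x + q * N y := by
          rw [hN.2.1, hN.2.1, abs_of_nonneg hp, abs_of_nonneg hq]
      _ = p • N x + q • N y := by simp [smul_eq_mul]
  have hfi : Integrable f μ := hf.integrableOn_Ioc
  have hgi : Integrable (N ∘ f) μ := (hN.continuous'.comp hf).integrableOn_Ioc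
  have hjen := hconv.map_average_le hN.continuous'.continuousOn isClosed_univ
    (Filter.Eventually.of_forall fun _ => Set.mem_univ _) hfi hgi
  rw [average_eq, average_eq] at hjen
  set T := (μ Set.univ).toReal with hT
  have hT0 : 0 < T := by
    rw [hT, hμuniv, ENNReal.toReal_ofReal (by linarith : (0:ℝ) ≤ b - a)]
    linarith
  have hTr : μ.real Set.univ = T := rfl
  rw [hTr] at hjen
  rw [hN.2.1, abs_of_nonneg (inv_nonneg.2 hT0.le), smul_eq_mul] at hjen
  have key : N (∫ t, f t ∂μ) ≤ ∫ t, N (f t) ∂μ := by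
    have h5 := mul_le_mul_of_nonneg_left hjen hT0.le
    rw [← mul_assoc, ← mul_assoc, mul_inv_cancel₀ hT0.ne', one_mul, one_mul] at h5
    simpa [Function.comp] using h5
  rw [intervalIntegral.integral_of_le hab, intervalIntegral.integral_of_le hab]
  exact key

end lemmas

noncomputable def mulVecCLM {d : ℕ} (v : Fin d → ℝ) :
    Matrix (Fin d) (Fin d) ℝ →L[ℝ] (Fin d → ℝ) :=
  letI : NormedRing (Matrix (Fin d) (Fin d) ℝ) := Matrix.linftyOpNormedRing
  letI : NormedAlgebra ℝ (Matrix (Fin d) (Fin d) ℝ) := Matrix.linftyOpNormedAlgebra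
  LinearMap.toContinuousLinearMap
    { toFun := fun M => M.mulVec v
      map_add' := fun M₁ M₂ => Matrix.add_mulVec M₁ M₂ v
      map_smul' := fun c M => by simp [Matrix.smul_mulVec] }

theorem hasDerivAt_exp_mulVec {d : ℕ} (A : Matrix (Fin d) (Fin d) ℝ) (v : Fin d → ℝ) (t : ℝ) :
    HasDerivAt (fun u : ℝ => (exp (u • A)).mulVec v)
      ((exp (t • A)).mulVec (A.mulVec v)) t := by
  letI : NormedRing (Matrix (Fin d) (Fin d) ℝ) := Matrix.linftyOpNormedRing
  letI : NormedAlgebra ℝ (Matrix (Fin d) (Fin d) ℝ) := Matrix.linftyOpNormedAlgebra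
  have h1 : HasDerivAt (fun u : ℝ => exp (u • A)) (exp (t • A) * A) t :=
    hasDerivAt_exp_smul_const A t
  have h2 := (mulVecCLM v).hasFDerivAt.comp_hasDerivAt t h1
  rw [Matrix.mulVec_mulVec]
  exact h2

/-- **Theorem 2.** Let `N` be an arbitrary norm on `ℝ^d`, `A` a `d×d` real matrix and
`h` a real number with `0 < h` and `h²·‖A²‖ < 8`.  If `x t = e^{tA} x₀`, then for every
`τ ∈ [0,h]` one has `N (x τ) ≤ (1 − (h²/8)‖A²‖)⁻¹ · max {N (x 0), N (x h)}`. -/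
theorem norm_solution_le {d : ℕ} (N : (Fin d → ℝ) → ℝ) (hN : IsNorm N)
    (A : Matrix (Fin d) (Fin d) ℝ) (h : ℝ) (hh : 0 < h)
    (hA : h ^ 2 * opNorm N (A * A) < 8)
    (x₀ : Fin d → ℝ) (x : ℝ → (Fin d → ℝ))
    (hx : ∀ t : ℝ, x t = (NormedSpace.exp (t • A)).mulVec x₀) :
    ∀ τ ∈ Set.Icc (0 : ℝ) h,
      N (x τ) ≤ (1 - h ^ 2 / 8 * opNorm N (A * A))⁻¹ * max (N (x 0)) (N (x h)) := by
  have hxfun : x = fun t => (exp (t • A)).mulVec x₀ := funext hx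
  subst hxfun
  set u : ℝ → (Fin d → ℝ) := fun t => (exp (t • A)).mulVec x₀ with hu
  set f : ℝ → (Fin d → ℝ) := fun t => (exp (t • A)).mulVec (A.mulVec x₀) with hf
  set g : ℝ → (Fin d → ℝ) := fun t => (exp (t • A)).mulVec ((A * A).mulVec x₀) with hg
  -- derivatives
  have hu' : ∀ t, HasDerivAt u (f t) t := fun t => hasDerivAt_exp_mulVec A x₀ t
  have hf' : ∀ t, HasDerivAt f (g t) t := by
    intro t
    have h2 : (A * A).mulVec x₀ = A.mulVec (A.mulVec x₀) := (Matrix.mulVec_mulVec x₀ A A).symm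
    show HasDerivAt (fun s : ℝ => (exp (s • A)).mulVec (A.mulVec x₀))
      ((exp (t • A)).mulVec ((A * A).mulVec x₀)) t
    rw [h2]
    exact hasDerivAt_exp_mulVec A (A.mulVec x₀) t
  have hucont : Continuous u := by
    rw [continuous_iff_continuousAt]; exact fun t => (hu' t).continuousAt
  have hgcont : Continuous g := by
    rw [continuous_iff_continuousAt]
    intro t
    exact (hasDerivAt_exp_mulVec A ((A * A).mulVec x₀) t).continuousAt
  -- g t = (A*A).mulVec (u t)
  have hgu : ∀ t, g t = (A * A).mulVec (u t) := by
    intro t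
    have hcomm : Commute (t • A) (A * A) :=
      ((Commute.refl A).mul_right (Commute.refl A)).smul_left t
    have hcomm2 : Commute (exp (t • A)) (A * A) := hcomm.exp_left
    rw [hg, hu]
    simp only [Matrix.mulVec_mulVec]
    rw [hcomm2.eq]
  -- Taylor formula with integral remainder
  have taylor : ∀ c τ : ℝ, (∫ s in τ..c, (c - s) • g s) = u c - u τ - (c - τ) • f τ := by
    intro c τ
    have hF : ∀ s ∈ Set.uIcc τ c,
        HasDerivAt (fun s => u s + (c - s) • f s) ((c - s) • g s) s := by
      intro s _
      have h1 : HasDerivAt (fun s : ℝ => c - s) (-1) s := by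
        simpa using (hasDerivAt_id s).const_sub c
      have h2 := h1.smul (hf' s)
      have h3 := (hu' s).add h2
      refine h3.congr_deriv ?_
      simp only [neg_smul, one_smul]
      abel
    have hint : IntervalIntegrable (fun s => (c - s) • g s) volume τ c :=
      ((continuous_const.sub continuous_id).smul hgcont).intervalIntegrable τ c
    have := intervalIntegral.integral_eq_sub_of_hasDerivAt hF hint
    rw [this]
    simp
    abel
  -- max of N ∘ u on [0, h]
  obtain ⟨tm, htm, hmax⟩ := (isCompact_Icc : IsCompact (Set.Icc (0:ℝ) h)).exists_isMaxOn
    (Set.nonempty_Icc.2 hh.le) (hN.continuous'.comp hucont).continuousOn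
  set Mx := N (u tm) with hMx
  have hmax' : ∀ t ∈ Set.Icc (0:ℝ) h, N (u t) ≤ Mx := fun t ht => hmax ht
  have hMx0 : 0 ≤ Mx := hN.nonneg' _
  set op := opNorm N (A * A) with hop
  have hop0 : 0 ≤ op := hN.opNorm_nonneg _
  -- bound N (g s) for s in [0, h]
  have hgbound : ∀ s ∈ Set.Icc (0:ℝ) h, N (g s) ≤ op * Mx := by
    intro s hs
    rw [hgu s]
    calc N ((A * A).mulVec (u s)) ≤ op * N (u s) := hN.mulVec_le _ _
      _ ≤ op * Mx := mul_le_mul_of_nonneg_left (hmax' s hs) hop0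
  -- the key pointwise estimate
  have key : ∀ τ ∈ Set.Icc (0:ℝ) h,
      N (u τ) ≤ max (N (u 0)) (N (u h)) + h ^ 2 / 8 * (op * Mx) := by
    rintro τ ⟨hτ0, hτh⟩
    set R0 := ∫ s in τ..(0:ℝ), ((0:ℝ) - s) • g s with hR0
    set Rh := ∫ s in τ..h, (h - s) • g s with hRh
    have e0 := taylor 0 τ
    have eh := taylor h τ
    -- identity
    have hid : u τ = ((h - τ)/h) • u 0 + (τ/h) • u h
        - ((h - τ)/h) • R0 - (τ/h) • Rh := by
      rw [hR0, hRh, e0, eh]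
      have hne : h ≠ 0 := hh.ne'
      match_scalars <;> field_simp <;> ring
    -- bound on N R0
    have hNR0 : N R0 ≤ τ ^ 2 / 2 * (op * Mx) := by
      have hflip : R0 = ∫ s in (0:ℝ)..τ, s • g s := by
        rw [hR0, intervalIntegral.integral_symm]
        rw [← intervalIntegral.integral_neg]
        congr 1
        ext s
        simp [neg_smul]
      rw [hflip]
      calc N (∫ s in (0:ℝ)..τ, s • g s) ≤ ∫ s in (0:ℝ)..τ, N (s • g s) :=
            hN.intervalIntegral_le (continuous_id.smul hgcont) hτ0
        _ ≤ ∫ s in (0:ℝ)..τ, s * (op * Mx) := by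
            refine intervalIntegral.integral_mono_on hτ0 ?_ ?_ ?_
            · exact ((hN.continuous'.comp (continuous_id.smul hgcont))).intervalIntegrable 0 τ
            · exact (continuous_id.mul continuous_const).intervalIntegrable 0 τ
            · intro s hs
              rw [hN.2.1, abs_of_nonneg hs.1]
              exact mul_le_mul_of_nonneg_left
                (hgbound s ⟨hs.1, hs.2.trans hτh⟩) hs.1
        _ = τ ^ 2 / 2 * (op * Mx) := by
            rw [intervalIntegral.integral_mul_const, integral_id]
            ring
    -- bound on N Rh
    have hNRh : N Rh ≤ (h - τ) ^ 2 / 2 * (op * Mx) := by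
      rw [hRh]
      calc N (∫ s in τ..h, (h - s) • g s) ≤ ∫ s in τ..h, N ((h - s) • g s) :=
            hN.intervalIntegral_le ((continuous_const.sub continuous_id).smul hgcont) hτh
        _ ≤ ∫ s in τ..h, (h - s) * (op * Mx) := by
            refine intervalIntegral.integral_mono_on hτh ?_ ?_ ?_
            · exact ((hN.continuous'.comp
                ((continuous_const.sub continuous_id).smul hgcont))).intervalIntegrable τ h
            · exact ((continuous_const.sub continuous_id).mul
                continuous_const).intervalIntegrable τ h
            · intro s hs
              rw [hN.2.1, abs_of_nonneg (by linarith [hs.2] : (0:ℝ) ≤ h - s)]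
              exact mul_le_mul_of_nonneg_left
                (hgbound s ⟨hτ0.trans hs.1, hs.2⟩) (by linarith [hs.2])
        _ = (h - τ) ^ 2 / 2 * (op * Mx) := by
            rw [intervalIntegral.integral_mul_const]
            have : (∫ s in τ..h, (h - s)) = (h - τ) ^ 2 / 2 := by
              rw [intervalIntegral.integral_sub intervalIntegrable_const
                (intervalIntegral.intervalIntegrable_id)]
              rw [intervalIntegral.integral_const, integral_id]
              simp
              ring
            rw [this]
    -- combine
    have hcoef0 : 0 ≤ (h - τ)/h := div_nonneg (by linarith) hh.le
    have hcoefh : 0 ≤ τ/h := div_nonneg hτ0 hh.le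
    have step1 : N (u τ) ≤ ((h - τ)/h) * N (u 0) + (τ/h) * N (u h)
        + ((h - τ)/h) * N R0 + (τ/h) * N Rh := by
      rw [hid]
      calc N (((h - τ)/h) • u 0 + (τ/h) • u h - ((h - τ)/h) • R0 - (τ/h) • Rh)
          ≤ N (((h - τ)/h) • u 0 + (τ/h) • u h - ((h - τ)/h) • R0) + N ((τ/h) • Rh) := by
            have := hN.sub_le' (((h - τ)/h) • u 0 + (τ/h) • u h - ((h - τ)/h) • R0) ((τ/h) • Rh)
            exact this
        _ ≤ N (((h - τ)/h) • u 0 + (τ/h) • u h) + N (((h - τ)/h) • R0) + N ((τ/h) • Rh) := by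
            have := hN.sub_le' (((h - τ)/h) • u 0 + (τ/h) • u h) (((h - τ)/h) • R0)
            linarith
        _ ≤ N (((h - τ)/h) • u 0) + N ((τ/h) • u h) + N (((h - τ)/h) • R0) + N ((τ/h) • Rh) := by
            have := hN.1 (((h - τ)/h) • u 0) ((τ/h) • u h)
            linarith
        _ = ((h - τ)/h) * N (u 0) + (τ/h) * N (u h)
            + ((h - τ)/h) * N R0 + (τ/h) * N Rh := by
            rw [hN.2.1, hN.2.1, hN.2.1, hN.2.1,
              abs_of_nonneg hcoef0, abs_of_nonneg hcoefh]
    have hmaxle : ((h - τ)/h) * N (u 0) + (τ/h) * N (u h)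
        ≤ max (N (u 0)) (N (u h)) := by
      have h0le : N (u 0) ≤ max (N (u 0)) (N (u h)) := le_max_left _ _
      have hhle : N (u h) ≤ max (N (u 0)) (N (u h)) := le_max_right _ _
      have hne : h ≠ 0 := hh.ne'
      have hcomb : (h - τ)/h * max (N (u 0)) (N (u h)) + τ/h * max (N (u 0)) (N (u h))
          = max (N (u 0)) (N (u h)) := by field_simp; ring
      linarith [mul_le_mul_of_nonneg_left h0le hcoef0,
        mul_le_mul_of_nonneg_left hhle hcoefh]
    have herr : ((h - τ)/h) * N R0 + (τ/h) * N Rh ≤ h ^ 2 / 8 * (op * Mx) := by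
      have h1 : ((h - τ)/h) * N R0 ≤ ((h - τ)/h) * (τ ^ 2 / 2 * (op * Mx)) :=
        mul_le_mul_of_nonneg_left hNR0 hcoef0
      have h2 : (τ/h) * N Rh ≤ (τ/h) * ((h - τ) ^ 2 / 2 * (op * Mx)) :=
        mul_le_mul_of_nonneg_left hNRh hcoefh
      have h3 : ((h - τ)/h) * (τ ^ 2 / 2 * (op * Mx)) + (τ/h) * ((h - τ) ^ 2 / 2 * (op * Mx))
          = τ * (h - τ) / 2 * (op * Mx) := by
        field_simp
        ring
      have h4 : τ * (h - τ) / 2 * (op * Mx) ≤ h ^ 2 / 8 * (op * Mx) := by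
        have hK : 0 ≤ op * Mx := mul_nonneg hop0 hMx0
        have : τ * (h - τ) / 2 ≤ h ^ 2 / 8 := by nlinarith [sq_nonneg (h - 2*τ)]
        exact mul_le_mul_of_nonneg_right this hK
      linarith
    linarith
  -- apply at the maximizer
  have hMxbound : Mx ≤ max (N (u 0)) (N (u h)) + h ^ 2 / 8 * (op * Mx) := key tm htm
  set c := h ^ 2 / 8 * op with hc
  have hc1 : c < 1 := by
    rw [hc]
    nlinarith
  have hc0 : 0 ≤ c := by positivity
  have hmaxnn : 0 ≤ max (N (u 0)) (N (u h)) := le_trans (hN.nonneg' _) (le_max_left _ _)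
  have hfinal : Mx ≤ (1 - c)⁻¹ * max (N (u 0)) (N (u h)) := by
    have h1c : 0 < 1 - c := by linarith
    have h2 : (1 - c) * Mx ≤ max (N (u 0)) (N (u h)) := by nlinarith [hMxbound]
    calc Mx = (1 - c)⁻¹ * ((1 - c) * Mx) := by field_simp
      _ ≤ (1 - c)⁻¹ * max (N (u 0)) (N (u h)) :=
          mul_le_mul_of_nonneg_left h2 (inv_nonneg.2 h1c.le)
  intro τ hτ
  calc N (u τ) ≤ Mx := hmax' τ hτ
    _ ≤ (1 - c)⁻¹ * max (N (u 0)) (N (u h)) := hfinal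
    _ = (1 - h ^ 2 / 8 * opNorm N (A * A))⁻¹ * max (N (u 0)) (N (u h)) := by rw [hc, hop]
end

section
/- Let ‖·‖ be a norm on ℝ^d, let A be a d×d real matrix, let m > 0 and h > 0 satisfy h²·‖A²‖ < 8, and set α = −(1/m)·ln(1 − h²‖A²‖/8), so α ≥ 0. Let z(t) = e^{tA} z₀ and suppose that ‖e^{mA}(e^{hA})^k z₀‖ ≤ ‖z₀‖ for every integer k ≥ 0. Then ‖z(t)‖ ≤ e^{α t} ‖z₀‖ for every t ≥ m. -/
namespace SingleModeAux

variable {d : ℕ} {N : (Fin d → ℝ) → ℝ}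

theorem N_zero (hN : IsNorm N) : N 0 = 0 := by
  have := hN.2.1 0 0; simpa using this

theorem N_neg (hN : IsNorm N) (x : Fin d → ℝ) : N (-x) = N x := by
  have := hN.2.1 (-1) x; simpa using this

theorem N_nonneg (hN : IsNorm N) (x : Fin d → ℝ) : 0 ≤ N x := by
  have h := hN.1 x (-x)
  rw [add_neg_cancel, N_zero hN, N_neg hN] at h
  linarith

/-- Type synonym carrying the norm `N`. -/
def WithN (d : ℕ) (N : (Fin d → ℝ) → ℝ) : Type := Fin d → ℝ

instance : AddCommGroup (WithN d N) := inferInstanceAs (AddCommGroup (Fin d → ℝ))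
noncomputable instance : Module ℝ (WithN d N) := inferInstanceAs (Module ℝ (Fin d → ℝ))

noncomputable def eqv (d : ℕ) (N : (Fin d → ℝ) → ℝ) : (Fin d → ℝ) ≃ₗ[ℝ] WithN d N := LinearEquiv.refl ℝ _

@[reducible] noncomputable def withNGroup (hN : IsNorm N) : NormedAddCommGroup (WithN d N) :=
  AddGroupNorm.toNormedAddCommGroup
    { toFun := N
      map_zero' := N_zero hN
      add_le' := hN.1
      neg' := N_neg hN
      eq_zero_of_map_eq_zero' := hN.2.2 }

theorem withN_norm (hN : IsNorm N) (x : WithN d N) :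
    @norm _ (withNGroup hN).toNorm x = N x := rfl

end SingleModeAux

namespace SingleModeAux

variable {d : ℕ} {N : (Fin d → ℝ) → ℝ}

section Normed

theorem N_facts (hN : IsNorm N) :
    Continuous N ∧
    (∀ {f : ℝ → Fin d → ℝ} {a b : ℝ}, a ≤ b → Continuous f →
      N (∫ σ in a..b, f σ) ≤ ∫ σ in a..b, N (f σ)) ∧
    (∀ M : Matrix (Fin d) (Fin d) ℝ, 0 ≤ opNorm N M ∧
      ∀ x, N (M.mulVec x) ≤ opNorm N M * N x) := by
  letI : NormedAddCommGroup (WithN d N) := withNGroup hN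
  letI : NormedSpace ℝ (WithN d N) :=
    { toModule := inferInstanceAs (Module ℝ (Fin d → ℝ))
      norm_smul_le := fun c x => le_of_eq (hN.2.1 c x) }
  haveI : FiniteDimensional ℝ (WithN d N) := Module.Finite.equiv (eqv d N)
  let L : (Fin d → ℝ) ≃L[ℝ] WithN d N := (eqv d N).toContinuousLinearEquiv
  have hLnorm : ∀ x : Fin d → ℝ, ‖L x‖ = N x := fun x => rfl
  have hNcont : Continuous N := by
    have : Continuous fun x : Fin d → ℝ => ‖L x‖ := L.continuous.norm
    simpa [hLnorm] using this
  refine ⟨hNcont, ?_, ?_⟩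
  · intro f a b hab hf
    have hint : IntervalIntegrable f MeasureTheory.volume a b := hf.intervalIntegrable a b
    have hcomm : L.toContinuousLinearMap (∫ σ in a..b, f σ)
        = ∫ σ in a..b, L.toContinuousLinearMap (f σ) :=
      (ContinuousLinearMap.intervalIntegral_comp_comm _ hint).symm
    calc N (∫ σ in a..b, f σ) = ‖L.toContinuousLinearMap (∫ σ in a..b, f σ)‖ := rfl
      _ = ‖∫ σ in a..b, L.toContinuousLinearMap (f σ)‖ := by rw [hcomm]
      _ ≤ ∫ σ in a..b, ‖L.toContinuousLinearMap (f σ)‖ :=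
          intervalIntegral.norm_integral_le_integral_norm hab
      _ = ∫ σ in a..b, N (f σ) := rfl
  · intro M
    -- bounded linear operator on WithN
    let T : WithN d N →L[ℝ] WithN d N :=
      LinearMap.toContinuousLinearMap
        (((eqv d N).toLinearMap.comp (Matrix.mulVecLin M)).comp (eqv d N).symm.toLinearMap)
    have hT : ∀ x : Fin d → ℝ, N (M.mulVec x) ≤ ‖T‖ * N x := by
      intro x
      have := T.le_opNorm (L x)
      exact this
    have hbdd : BddAbove {r : ℝ | ∃ x, N x ≤ 1 ∧ r = N (M.mulVec x)} := by
      refine ⟨‖T‖, ?_⟩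
      rintro r ⟨x, hx1, rfl⟩
      calc N (M.mulVec x) ≤ ‖T‖ * N x := hT x
        _ ≤ ‖T‖ * 1 := by
            exact mul_le_mul_of_nonneg_left hx1 (norm_nonneg T)
        _ = ‖T‖ := mul_one _
    have hmem0 : (0 : ℝ) ∈ {r : ℝ | ∃ x, N x ≤ 1 ∧ r = N (M.mulVec x)} :=
      ⟨0, by simp [N_zero hN], by simp [N_zero hN]⟩
    have hop0 : 0 ≤ opNorm N M := le_csSup hbdd hmem0
    refine ⟨hop0, fun x => ?_⟩
    rcases eq_or_lt_of_le (N_nonneg hN x) with h0 | hpos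
    · have hx0 : x = 0 := hN.2.2 x h0.symm
      simp [hx0, N_zero hN]
    · have hy : N ((N x)⁻¹ • x) ≤ 1 := by
        rw [hN.2.1, abs_of_pos (inv_pos.2 hpos), inv_mul_cancel₀ (ne_of_gt hpos)]
      have hmem : N (M.mulVec ((N x)⁻¹ • x)) ∈
          {r : ℝ | ∃ x, N x ≤ 1 ∧ r = N (M.mulVec x)} := ⟨_, hy, rfl⟩
      have hle : N (M.mulVec ((N x)⁻¹ • x)) ≤ opNorm N M := le_csSup hbdd hmem
      rw [Matrix.mulVec_smul, hN.2.1, abs_of_pos (inv_pos.2 hpos)] at hle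
      calc N (M.mulVec x) = N x * ((N x)⁻¹ * N (M.mulVec x)) := by
            field_simp
        _ ≤ N x * opNorm N M := mul_le_mul_of_nonneg_left hle (le_of_lt hpos)
        _ = opNorm N M * N x := mul_comm _ _
end Normed

end SingleModeAux

namespace SingleModeAux

open NormedSpace

attribute [local instance] Matrix.linftyOpNormedAddCommGroup Matrix.linftyOpNormedRing
  Matrix.linftyOpNormedAlgebra

variable {d : ℕ} (A : Matrix (Fin d) (Fin d) ℝ) (z₀ : Fin d → ℝ)

/-- `M ↦ M.mulVec z₀` as a continuous linear map. -/
noncomputable def mulVecCLM : Matrix (Fin d) (Fin d) ℝ →L[ℝ] (Fin d → ℝ) :=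
  LinearMap.toContinuousLinearMap
    { toFun := fun M => M.mulVec z₀
      map_add' := fun M M' => Matrix.add_mulVec M M' z₀
      map_smul' := fun c M => (Matrix.smul_mulVec c M z₀) }

theorem mulVecCLM_apply (M : Matrix (Fin d) (Fin d) ℝ) : mulVecCLM z₀ M = M.mulVec z₀ := rfl

theorem hasDerivAt_Z (t : ℝ) :
    HasDerivAt (fun s : ℝ => (exp (s • A)).mulVec z₀)
      (A.mulVec ((exp (t • A)).mulVec z₀)) t := by
  have h1 : HasDerivAt (fun s : ℝ => exp (s • A)) (A * exp (t • A)) t :=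
    hasDerivAt_exp_smul_const' A t
  have h2 := ((mulVecCLM z₀).hasFDerivAt.comp_hasDerivAt t h1)
  exact h2.congr_deriv (Matrix.mulVec_mulVec z₀ A (exp (t • A))).symm

theorem continuous_Z : Continuous (fun s : ℝ => (exp (s • A)).mulVec z₀) :=
  continuous_iff_continuousAt.2 fun t => (hasDerivAt_Z A z₀ t).continuousAt

/-- Taylor expansion with integral remainder. -/
theorem taylor (b c : ℝ) :
    (exp (b • A)).mulVec z₀ =
      (exp (c • A)).mulVec z₀ + (b - c) • (A.mulVec ((exp (c • A)).mulVec z₀)) +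
        ∫ σ in c..b, (b - σ) • ((A * A).mulVec ((exp (σ • A)).mulVec z₀)) := by
  set Z : ℝ → (Fin d → ℝ) := fun s => (exp (s • A)).mulVec z₀ with hZ
  set w : ℝ → (Fin d → ℝ) := fun σ => (b - σ) • ((A * A).mulVec (Z σ)) with hw
  have hAAcont : Continuous fun v : Fin d → ℝ => (A * A).mulVec v :=
    (LinearMap.toContinuousLinearMap (Matrix.mulVecLin (A * A))).continuous
  have hwcont : Continuous w :=
    (continuous_const.sub continuous_id).smul (hAAcont.comp (continuous_Z A z₀))
  -- the function whose derivative is zero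
  set G : ℝ → (Fin d → ℝ) := fun c => Z c + (b - c) • (A.mulVec (Z c)) + ∫ σ in c..b, w σ
    with hG
  have hAcont : Continuous fun v : Fin d → ℝ => A.mulVec v :=
    (LinearMap.toContinuousLinearMap (Matrix.mulVecLin A)).continuous
  have hGderiv : ∀ c : ℝ, HasDerivAt G 0 c := by
    intro c
    have h1 : HasDerivAt Z (A.mulVec (Z c)) c := hasDerivAt_Z A z₀ c
    have h2 : HasDerivAt (fun s : ℝ => A.mulVec (Z s)) ((A * A).mulVec (Z c)) c := by
      have := ((LinearMap.toContinuousLinearMap (Matrix.mulVecLin A)).hasFDerivAt.comp_hasDerivAt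
        c h1)
      exact this.congr_deriv (Matrix.mulVec_mulVec (Z c) A A)
    have h3 : HasDerivAt (fun s : ℝ => (b - s) • (A.mulVec (Z s)))
        ((-1 : ℝ) • (A.mulVec (Z c)) + (b - c) • ((A * A).mulVec (Z c))) c := by
      have := HasDerivAt.smul ((hasDerivAt_const c b).sub (hasDerivAt_id c)) h2
      refine this.congr_deriv ?_
      simp only [Pi.sub_apply, id]
      module
    have h4 : HasDerivAt (fun s : ℝ => ∫ σ in s..b, w σ) (-w c) c := by
      have hint : IntervalIntegrable w MeasureTheory.volume c b :=
        hwcont.intervalIntegrable c b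
      exact intervalIntegral.integral_hasDerivAt_left hint
        (hwcont.stronglyMeasurableAtFilter _ _) hwcont.continuousAt
    have := (h1.add h3).add h4
    refine this.congr_deriv ?_
    simp only [hw]
    module
  have hconst : G c = G b := by
    have hdiff : Differentiable ℝ G := fun x => (hGderiv x).differentiableAt
    have hzero : ∀ x, deriv G x = 0 := fun x => (hGderiv x).deriv
    exact is_const_of_deriv_eq_zero hdiff hzero c b
  have hGb : G b = Z b := by
    simp [hG, intervalIntegral.integral_same]
  show Z b = Z c + (b - c) • A.mulVec (Z c) + ∫ σ in c..b, w σ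
  rw [← hGb, ← hconst]
end SingleModeAux

namespace SingleModeAux

open NormedSpace MeasureTheory intervalIntegral

variable {d : ℕ}

theorem interval_bound {N : (Fin d → ℝ) → ℝ} (hN : IsNorm N)
    (A : Matrix (Fin d) (Fin d) ℝ) (z₀ : Fin d → ℝ) (a h B : ℝ) (hh : 0 < h)
    (hB0 : N ((exp (a • A)).mulVec z₀) ≤ B)
    (hBh : N ((exp ((a + h) • A)).mulVec z₀) ≤ B)
    (hqlt : h ^ 2 * opNorm N (A * A) < 8) :
    ∀ τ ∈ Set.Icc a (a + h),
      N ((exp (τ • A)).mulVec z₀) ≤ B / (1 - h ^ 2 * opNorm N (A * A) / 8) := by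
  obtain ⟨hNcont, hNint, hNop⟩ := N_facts hN
  set K := opNorm N (A * A) with hK
  have hK0 : 0 ≤ K := (hNop (A * A)).1
  set Z : ℝ → (Fin d → ℝ) := fun s => (exp (s • A)).mulVec z₀ with hZdef
  set w : ℝ → (Fin d → ℝ) := fun σ => (A * A).mulVec (Z σ) with hwdef
  have hZcont : Continuous Z := continuous_Z A z₀
  have hAAcont : Continuous fun v : Fin d → ℝ => (A * A).mulVec v :=
    (LinearMap.toContinuousLinearMap (Matrix.mulVecLin (A * A))).continuous
  have hwcont : Continuous w := hAAcont.comp hZcont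
  have hIcc : (Set.Icc a (a + h)).Nonempty := ⟨a, by constructor <;> linarith⟩
  obtain ⟨τs, hτs, hmax⟩ := isCompact_Icc.exists_isMaxOn hIcc
    ((hNcont.comp hZcont).continuousOn (s := Set.Icc a (a + h)))
  set S := N (Z τs) with hSdef
  have hS0 : 0 ≤ S := N_nonneg hN _
  have hSle : ∀ τ ∈ Set.Icc a (a + h), N (Z τ) ≤ S := fun τ hτ => hmax hτ
  -- Taylor expansions around τs
  set v : Fin d → ℝ := A.mulVec (Z τs) with hvdef
  set R₀ : Fin d → ℝ := ∫ σ in τs..a, (a - σ) • w σ with hR₀def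
  set R₁ : Fin d → ℝ := ∫ σ in τs..(a + h), (a + h - σ) • w σ with hR₁def
  have e0 : Z a = Z τs + (a - τs) • v + R₀ := taylor A z₀ a τs
  have e1 : Z (a + h) = Z τs + (a + h - τs) • v + R₁ := taylor A z₀ (a + h) τs
  set μ : ℝ := (a + h - τs) / h with hμdef
  have hτs1 : a ≤ τs := hτs.1
  have hτs2 : τs ≤ a + h := hτs.2
  have hμ0 : 0 ≤ μ := div_nonneg (by linarith) hh.le
  have hμ1 : μ ≤ 1 := by rw [div_le_one hh]; linarith
  have hscalar : μ * (a - τs) + (1 - μ) * (a + h - τs) = 0 := by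
    field_simp [hμdef]
    rw [hμdef, div_mul_eq_mul_div, one_sub_div hh.ne', div_mul_eq_mul_div, ← add_div,
      div_eq_zero_iff]
    left; ring
  have expand : μ • Z a + (1 - μ) • Z (a + h) + μ • (-R₀) + (1 - μ) • (-R₁)
      = Z τs + (μ * (a - τs) + (1 - μ) * (a + h - τs)) • v := by
    rw [e0, e1]; module
  have key : Z τs = μ • Z a + (1 - μ) • Z (a + h) + μ • (-R₀) + (1 - μ) • (-R₁) := by
    rw [expand, hscalar, zero_smul, add_zero]
  -- norm inequality
  have step : S ≤ N (μ • Z a) + N ((1 - μ) • Z (a + h)) + N (μ • (-R₀)) + N ((1 - μ) • (-R₁)) := by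
    rw [hSdef, key]
    exact le_trans (hN.1 _ _) (add_le_add_left
      (le_trans (hN.1 _ _) (add_le_add_left (hN.1 _ _) _)) _)
  have hsmul : ∀ (c : ℝ), 0 ≤ c → ∀ x, N (c • x) = c * N x := fun c hc x => by
    rw [hN.2.1, abs_of_nonneg hc]
  have step2 : S ≤ μ * N (Z a) + (1 - μ) * N (Z (a + h)) + μ * N R₀ + (1 - μ) * N R₁ := by
    rw [hsmul μ hμ0, hsmul (1 - μ) (by linarith), hsmul μ hμ0, hsmul (1 - μ) (by linarith),
      N_neg hN, N_neg hN] at step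
    exact step
  -- bound the remainders
  have hR0bound : N R₀ ≤ K * S * (τs - a) ^ 2 / 2 := by
    have horient : R₀ = -(∫ σ in a..τs, (a - σ) • w σ) := intervalIntegral.integral_symm a τs
    have hg : Continuous fun σ : ℝ => (a - σ) • w σ :=
      (continuous_const.sub continuous_id).smul hwcont
    calc N R₀ = N (∫ σ in a..τs, (a - σ) • w σ) := by rw [horient, N_neg hN]
      _ ≤ ∫ σ in a..τs, N ((a - σ) • w σ) := hNint hτs1 hg
      _ ≤ ∫ σ in a..τs, (σ - a) * (K * S) := by
          apply intervalIntegral.integral_mono_on hτs1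
            ((hNcont.comp hg).intervalIntegrable a τs)
            (((continuous_id.sub continuous_const).mul continuous_const).intervalIntegrable a τs)
          intro σ hσ
          simp only [Function.comp_apply, id_eq]
          rw [hN.2.1, abs_of_nonpos (by linarith [hσ.1] : a - σ ≤ 0)]
          have hw1 : N (w σ) ≤ K * S := by
            calc N (w σ) ≤ K * N (Z σ) := (hNop (A * A)).2 (Z σ)
              _ ≤ K * S := mul_le_mul_of_nonneg_left
                  (hSle σ ⟨hσ.1, le_trans hσ.2 hτs2⟩) hK0
          have : -(a - σ) = σ - a := by ring
          rw [this]
          exact mul_le_mul_of_nonneg_left hw1 (by linarith [hσ.1])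
      _ = K * S * (τs - a) ^ 2 / 2 := by
          rw [intervalIntegral.integral_mul_const,
            intervalIntegral.integral_sub intervalIntegrable_id intervalIntegrable_const,
            integral_id, intervalIntegral.integral_const]
          simp only [smul_eq_mul]
          ring
  have hR1bound : N R₁ ≤ K * S * (a + h - τs) ^ 2 / 2 := by
    have hg : Continuous fun σ : ℝ => (a + h - σ) • w σ :=
      (continuous_const.sub continuous_id).smul hwcont
    calc N R₁ ≤ ∫ σ in τs..(a + h), N ((a + h - σ) • w σ) := hNint hτs2 hg
      _ ≤ ∫ σ in τs..(a + h), (a + h - σ) * (K * S) := by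
          apply intervalIntegral.integral_mono_on hτs2
            ((hNcont.comp hg).intervalIntegrable _ _)
            (((continuous_const.sub continuous_id).mul continuous_const).intervalIntegrable _ _)
          intro σ hσ
          simp only [Function.comp_apply, id_eq]
          rw [hN.2.1, abs_of_nonneg (by linarith [hσ.2] : (0:ℝ) ≤ a + h - σ)]
          have hw1 : N (w σ) ≤ K * S := by
            calc N (w σ) ≤ K * N (Z σ) := (hNop (A * A)).2 (Z σ)
              _ ≤ K * S := mul_le_mul_of_nonneg_left
                  (hSle σ ⟨le_trans hτs1 hσ.1, hσ.2⟩) hK0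
          exact mul_le_mul_of_nonneg_left hw1 (by linarith [hσ.2])
      _ = K * S * (a + h - τs) ^ 2 / 2 := by
          rw [intervalIntegral.integral_mul_const,
            intervalIntegral.integral_sub intervalIntegrable_const intervalIntegrable_id,
            integral_id, intervalIntegral.integral_const]
          simp only [smul_eq_mul]
          ring
  -- combine: S ≤ B + (h^2 K / 8) * S
  have hcomb : S ≤ B + h ^ 2 * K / 8 * S := by
    have hu1 : 0 ≤ τs - a := by linarith
    have hu2 : 0 ≤ a + h - τs := by linarith
    have hmain : S ≤ μ * B + (1 - μ) * B + μ * (K * S * (τs - a) ^ 2 / 2)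
        + (1 - μ) * (K * S * (a + h - τs) ^ 2 / 2) := by
      refine le_trans step2 ?_
      have h1 : μ * N (Z a) ≤ μ * B := mul_le_mul_of_nonneg_left hB0 hμ0
      have h2 : (1 - μ) * N (Z (a + h)) ≤ (1 - μ) * B :=
        mul_le_mul_of_nonneg_left hBh (by linarith)
      have h3 : μ * N R₀ ≤ μ * (K * S * (τs - a) ^ 2 / 2) :=
        mul_le_mul_of_nonneg_left hR0bound hμ0
      have h4 : (1 - μ) * N R₁ ≤ (1 - μ) * (K * S * (a + h - τs) ^ 2 / 2) :=
        mul_le_mul_of_nonneg_left hR1bound (by linarith)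
      linarith
    have hid : μ * (K * S * (τs - a) ^ 2 / 2) + (1 - μ) * (K * S * (a + h - τs) ^ 2 / 2)
        = K * S * ((τs - a) * (a + h - τs)) / 2 := by
      rw [hμdef]; field_simp; ring
    have hmain2 : S ≤ B + K * S * ((τs - a) * (a + h - τs)) / 2 := by
      have : μ * B + (1 - μ) * B = B := by ring
      linarith [hmain, hid.le, hid.ge]
    nlinarith [mul_nonneg (mul_nonneg hK0 hS0) (sq_nonneg (2 * (τs - a) - h))]
  have hq1 : 1 - h ^ 2 * K / 8 > 0 := by linarith
  intro τ hτ
  have : N (Z τ) ≤ S := hSle τ hτ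
  have hfin : S ≤ B / (1 - h ^ 2 * K / 8) := by
    rw [le_div_iff₀ hq1]
    have hexp : S * (1 - h ^ 2 * K / 8) = S - h ^ 2 * K / 8 * S := by ring
    linarith
  calc N (Z τ) ≤ S := this
    _ ≤ B / (1 - h ^ 2 * K / 8) := hfin

end SingleModeAux

namespace SingleModeAux

open NormedSpace

theorem exp_grid {d : ℕ} (A : Matrix (Fin d) (Fin d) ℝ) (m h : ℝ) (k : ℕ) :
    exp ((m + (k : ℝ) * h) • A) = exp (m • A) * exp (h • A) ^ k := by
  have hc : Commute (m • A) (((k : ℝ) * h) • A) :=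
    ((Commute.refl A).smul_left m).smul_right ((k : ℝ) * h)
  have h1 : exp (m • A + ((k : ℝ) * h) • A) = exp (m • A) * exp (((k : ℝ) * h) • A) :=
    Matrix.exp_add_of_commute _ _ hc
  have h2 : exp (((k : ℝ) * h) • A) = exp (h • A) ^ k := by
    have hsm : ((k : ℝ) * h) • A = k • (h • A) := by
      rw [mul_smul, Nat.cast_smul_eq_nsmul]
    rw [hsm]
    exact Matrix.exp_nsmul _ _
  rw [add_smul, h1, h2]

end SingleModeAux

/-- **Single-mode estimate.** Let `N` be a norm on `ℝ^d`, `A` a `d×d` real matrix,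
`m > 0`, `h > 0` with `h²·‖A²‖ < 8`, and set `α = −(1/m)·ln(1 − h²‖A²‖/8)`, so `α ≥ 0`.
If `z t = e^{tA} z₀` and `N (e^{mA} (e^{hA})^k z₀) ≤ N z₀` for every `k : ℕ`, then
`N (z t) ≤ e^{α t} N z₀` for every `t ≥ m`. -/
theorem single_mode_estimate {d : ℕ} (N : (Fin d → ℝ) → ℝ) (hN : IsNorm N)
    (A : Matrix (Fin d) (Fin d) ℝ) (m h : ℝ) (hm : 0 < m) (hh : 0 < h)
    (hA : h ^ 2 * opNorm N (A * A) < 8)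
    (α : ℝ) (hα : α = -(1 / m) * Real.log (1 - h ^ 2 * opNorm N (A * A) / 8))
    (z₀ : Fin d → ℝ) (z : ℝ → (Fin d → ℝ))
    (hz : ∀ t : ℝ, z t = (NormedSpace.exp (t • A)).mulVec z₀)
    (hgrid : ∀ k : ℕ,
      N ((NormedSpace.exp (m • A) * (NormedSpace.exp (h • A)) ^ k).mulVec z₀) ≤ N z₀) :
    0 ≤ α ∧ ∀ t : ℝ, m ≤ t → N (z t) ≤ Real.exp (α * t) * N z₀ := by
  open SingleModeAux in
  obtain ⟨hNcont, hNint, hNop⟩ := SingleModeAux.N_facts hN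
  set K := opNorm N (A * A) with hK
  have hK0 : 0 ≤ K := (hNop (A * A)).1
  have hq0 : 0 ≤ h ^ 2 * K / 8 := by positivity
  have hq1 : h ^ 2 * K / 8 < 1 := by linarith
  have hpos : 0 < 1 - h ^ 2 * K / 8 := by linarith
  have hα0 : 0 ≤ α := by
    rw [hα]
    have hlog : Real.log (1 - h ^ 2 * K / 8) ≤ 0 := Real.log_nonpos (by linarith) (by linarith)
    have h1m : (0 : ℝ) ≤ 1 / m := by positivity
    nlinarith
  refine ⟨hα0, fun t ht => ?_⟩
  set k := ⌊(t - m) / h⌋₊ with hkdef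
  have htm : 0 ≤ (t - m) / h := div_nonneg (by linarith) hh.le
  have hk1 : m + (k : ℝ) * h ≤ t := by
    have := Nat.floor_le htm
    rw [le_div_iff₀ hh] at this
    linarith
  have hk2 : t ≤ m + (k : ℝ) * h + h := by
    have := Nat.lt_floor_add_one ((t - m) / h)
    rw [div_lt_iff₀ hh] at this
    linarith
  set a := m + (k : ℝ) * h with hadef
  have grid0 : N ((NormedSpace.exp (a • A)).mulVec z₀) ≤ N z₀ := by
    rw [hadef, SingleModeAux.exp_grid]
    exact hgrid k
  have grid1 : N ((NormedSpace.exp ((a + h) • A)).mulVec z₀) ≤ N z₀ := by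
    have : a + h = m + ((k + 1 : ℕ) : ℝ) * h := by push_cast; ring
    rw [this, SingleModeAux.exp_grid]
    exact hgrid (k + 1)
  have hb := SingleModeAux.interval_bound hN A z₀ a h (N z₀) hh grid0 grid1 hA t
    ⟨by linarith, by linarith⟩
  have hNz0 : 0 ≤ N z₀ := SingleModeAux.N_nonneg hN z₀
  have hexpm : Real.exp (α * m) = (1 - h ^ 2 * K / 8)⁻¹ := by
    rw [hα]
    have : -(1 / m) * Real.log (1 - h ^ 2 * K / 8) * m = -Real.log (1 - h ^ 2 * K / 8) := by
      field_simp
    rw [this, Real.exp_neg, Real.exp_log hpos]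
  have hmono : Real.exp (α * m) ≤ Real.exp (α * t) :=
    Real.exp_le_exp.2 (mul_le_mul_of_nonneg_left ht hα0)
  calc N (z t) = N ((NormedSpace.exp (t • A)).mulVec z₀) := by rw [hz t]
    _ ≤ N z₀ / (1 - h ^ 2 * K / 8) := hb
    _ = Real.exp (α * m) * N z₀ := by rw [hexpm, div_eq_inv_mul]
    _ ≤ Real.exp (α * t) * N z₀ := mul_le_mul_of_nonneg_right hmono hNz0
end

section
/- Let A₁,…,A_n be d×d real matrices, let m > 0, 0 < h ≤ m, σ_h ∈ ℝ, and let ‖·‖₁,…,‖·‖_n be norms on ℝ^d forming an extremal multinorm datum for the h-discretization with value σ_h. Set c = max_{j=1,…,n} ‖(A_j − σ_h I)²‖_j, where ‖·‖_j also denotes the operator norm induced by the norm ‖·‖_j, and assume c·h² < 8. Set α = σ_h − (1/m)·ln(1 − c h²/8). Then for every trajectory x of the switched system for {A₁,…,A_n} with dwell time at least m, with switching times 0 = t₀ < t₁ < t₂ < ⋯ and modes j₀, j₁, j₂, …: (i) for every index k and every t ∈ [t_k + m, t_{k+1}] one has ‖x(t)‖_{j_k} ≤ e^{α t} ‖x(0)‖_{j_0};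 and (ii) for any fixed norm ‖·‖ on ℝ^d there exists a constant C ≥ 0 such that ‖x(t)‖ ≤ C e^{α t} for all t ≥ 0. -/
open scoped ENNReal

namespace TBE

variable {d : ℕ} {N : (Fin d → ℝ) → ℝ}

lemma norm_zero (hN : IsNorm N) : N 0 = 0 := by
  have := hN.2.1 0 0; simpa using this

lemma norm_neg (hN : IsNorm N) (x : Fin d → ℝ) : N (-x) = N x := by
  have := hN.2.1 (-1) x; simpa using this

lemma norm_nonneg' (hN : IsNorm N) (x : Fin d → ℝ) : 0 ≤ N x := by
  have h := hN.1 x (-x)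
  rw [add_neg_cancel, norm_zero hN, norm_neg hN] at h
  linarith

lemma norm_upper (hN : IsNorm N) : ∃ b : ℝ, 0 ≤ b ∧ ∀ x, N x ≤ b * ‖x‖ := by
  refine ⟨∑ i : Fin d, N (Pi.single i (1:ℝ)), Finset.sum_nonneg fun i _ => norm_nonneg' hN _,
    fun x => ?_⟩
  have hx : x = ∑ i : Fin d, x i • (Pi.single i (1:ℝ) : Fin d → ℝ) := by
    ext k
    rw [Finset.sum_apply]
    simp [Pi.single_apply]
  calc N x = N (∑ i : Fin d, x i • (Pi.single i (1:ℝ) : Fin d → ℝ)) := by rw [← hx]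
    _ ≤ ∑ i : Fin d, N (x i • (Pi.single i (1:ℝ) : Fin d → ℝ)) :=
        Finset.le_sum_of_subadditive N (norm_zero hN).le hN.1 _ _
    _ ≤ ∑ i : Fin d, N (Pi.single i (1:ℝ)) * ‖x‖ := by
        refine Finset.sum_le_sum fun i _ => ?_
        rw [hN.2.1, mul_comm]
        exact mul_le_mul_of_nonneg_left
          ((Real.norm_eq_abs (x i)) ▸ norm_le_pi_norm x i) (norm_nonneg' hN _)
    _ = (∑ i : Fin d, N (Pi.single i (1:ℝ))) * ‖x‖ := (Finset.sum_mul ..).symm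

lemma norm_continuous (hN : IsNorm N) : Continuous N := by
  obtain ⟨b, hb0, hb⟩ := norm_upper hN
  have key : ∀ p q : Fin d → ℝ, N p - N q ≤ b * ‖p - q‖ := by
    intro p q
    have h1 := hN.1 (p - q) q
    rw [sub_add_cancel] at h1
    have := hb (p - q)
    linarith
  rw [Metric.continuous_iff]
  intro q ε hε
  by_cases hb' : b = 0
  · exact ⟨1, one_pos, fun p _ => by
      have h1 := key p q; have h2 := key q p
      rw [hb'] at h1 h2
      have : N p = N q := by
        simp only [zero_mul] at h1 h2
        linarith
      simpa [Real.dist_eq, this] using hε⟩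
  · have hbpos : 0 < b := lt_of_le_of_ne hb0 (Ne.symm hb')
    refine ⟨ε / b, by positivity, fun p hp => ?_⟩
    have h1 := key p q
    have h2 := key q p
    rw [dist_eq_norm] at hp
    have hqp : ‖q - p‖ = ‖p - q‖ := norm_sub_rev q p
    rw [Real.dist_eq, abs_sub_lt_iff]
    constructor
    · calc N p - N q ≤ b * ‖p - q‖ := h1
        _ < b * (ε / b) := by exact mul_lt_mul_of_pos_left hp hbpos
        _ = ε := by field_simp
    · calc N q - N p ≤ b * ‖q - p‖ := h2
        _ = b * ‖p - q‖ := by rw [hqp]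
        _ < ε := by rw [← mul_div_cancel₀ ε (ne_of_gt hbpos)] ; exact mul_lt_mul_of_pos_left hp hbpos

lemma norm_lower (hN : IsNorm N) : ∃ a : ℝ, 0 < a ∧ ∀ x, a * ‖x‖ ≤ N x := by
  rcases Nat.eq_zero_or_pos d with hd | hd
  · refine ⟨1, one_pos, fun x => ?_⟩
    subst hd
    have hx0 : x = 0 := Subsingleton.elim x 0
    rw [hx0, norm_zero hN]
    simp
  · haveI : Nonempty (Fin d) := ⟨⟨0, hd⟩⟩
    have hsne : (Metric.sphere (0 : Fin d → ℝ) 1).Nonempty :=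
      NormedSpace.sphere_nonempty.2 zero_le_one
    obtain ⟨x₀, hx₀S, hmin⟩ :=
      (isCompact_sphere (0 : Fin d → ℝ) 1).exists_isMinOn hsne (norm_continuous hN).continuousOn
    have hx₀norm : ‖x₀‖ = 1 := by simpa using hx₀S
    have hx₀ne : x₀ ≠ 0 := by intro h; rw [h] at hx₀norm; simp at hx₀norm
    have ha : 0 < N x₀ := by
      rcases lt_or_eq_of_le (norm_nonneg' hN x₀) with h | h
      · exact h
      · exact absurd (hN.2.2 x₀ h.symm) hx₀ne
    refine ⟨N x₀, ha, fun x => ?_⟩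
    by_cases hx : x = 0
    · simp [hx, norm_zero hN]
    · have hxn : (0:ℝ) < ‖x‖ := norm_pos_iff.2 hx
      have hmem : ‖x‖⁻¹ • x ∈ Metric.sphere (0 : Fin d → ℝ) 1 := by
        simp [norm_smul, abs_of_pos (inv_pos.2 hxn), inv_mul_cancel₀ (ne_of_gt hxn)]
      have h1 : N x₀ ≤ N (‖x‖⁻¹ • x) := hmin hmem
      rw [hN.2.1, abs_of_pos (inv_pos.2 hxn)] at h1
      calc N x₀ * ‖x‖ ≤ (‖x‖⁻¹ * N x) * ‖x‖ :=
            mul_le_mul_of_nonneg_right h1 (norm_nonneg x)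
        _ = N x := by field_simp


lemma opNorm_spec (hN : IsNorm N) (M : Matrix (Fin d) (Fin d) ℝ) :
    0 ≤ opNorm N M ∧ ∀ x, N (M.mulVec x) ≤ opNorm N M * N x := by
  obtain ⟨b, hb0, hb⟩ := norm_upper hN
  obtain ⟨a, ha0, ha⟩ := norm_lower hN
  set S : Set ℝ := {r : ℝ | ∃ x, N x ≤ 1 ∧ r = N (M.mulVec x)} with hS
  have hCM : ∃ CM : ℝ, 0 ≤ CM ∧ ∀ y : Fin d → ℝ, ‖M.mulVec y‖ ≤ CM * ‖y‖ := by
    refine ⟨‖(LinearMap.toContinuousLinearMap M.mulVecLin : (Fin d → ℝ) →L[ℝ] (Fin d → ℝ))‖,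
      norm_nonneg _, fun y => ?_⟩
    simpa using (LinearMap.toContinuousLinearMap M.mulVecLin).le_opNorm y
  obtain ⟨CM, hCM0, hCMle⟩ := hCM
  have hbdd : BddAbove S := by
    refine ⟨b * CM * a⁻¹, fun r hr => ?_⟩
    obtain ⟨y, hy1, rfl⟩ := hr
    have h1 : N (M.mulVec y) ≤ b * ‖M.mulVec y‖ := hb _
    have h2 : ‖M.mulVec y‖ ≤ CM * ‖y‖ := hCMle y
    have h3 : ‖y‖ ≤ a⁻¹ * N y := by
      rw [le_inv_mul_iff₀ ha0]; exact ha y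
    have h4 : N y ≤ 1 := hy1
    have h5 : ‖y‖ ≤ a⁻¹ := by
      calc ‖y‖ ≤ a⁻¹ * N y := h3
        _ ≤ a⁻¹ * 1 := by
            exact mul_le_mul_of_nonneg_left h4 (inv_nonneg.2 ha0.le)
        _ = a⁻¹ := mul_one _
    calc N (M.mulVec y) ≤ b * ‖M.mulVec y‖ := h1
      _ ≤ b * (CM * ‖y‖) := mul_le_mul_of_nonneg_left h2 hb0
      _ ≤ b * (CM * a⁻¹) := by
          refine mul_le_mul_of_nonneg_left ?_ hb0
          exact mul_le_mul_of_nonneg_left h5 hCM0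
      _ = b * CM * a⁻¹ := by ring
  have h0mem : (0:ℝ) ∈ S := ⟨0, by rw [norm_zero hN]; exact zero_le_one, by
    rw [Matrix.mulVec_zero, norm_zero hN]⟩
  have hop0 : 0 ≤ opNorm N M := le_csSup hbdd h0mem
  refine ⟨hop0, fun x => ?_⟩
  rcases eq_or_lt_of_le (norm_nonneg' hN x) with h | h
  · have hx0 : x = 0 := hN.2.2 x h.symm
    rw [hx0, Matrix.mulVec_zero, norm_zero hN]
    simp
  · have hmem : N ((N x)⁻¹ • x) ≤ 1 := by
      rw [hN.2.1, abs_of_pos (inv_pos.2 h), inv_mul_cancel₀ (ne_of_gt h)]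
    have hval : (N x)⁻¹ * N (M.mulVec x) ∈ S := by
      refine ⟨(N x)⁻¹ • x, hmem, ?_⟩
      rw [Matrix.mulVec_smul, hN.2.1, abs_of_pos (inv_pos.2 h)]
    have := le_csSup hbdd hval
    rw [le_iff_lt_or_eq] at this
    have h6 : (N x)⁻¹ * N (M.mulVec x) ≤ opNorm N M := le_csSup hbdd hval
    calc N (M.mulVec x) = ((N x)⁻¹ * N (M.mulVec x)) * N x := by field_simp
      _ ≤ opNorm N M * N x := mul_le_mul_of_nonneg_right h6 (norm_nonneg' hN x)

/-- Dual functional attaining the norm at `v`. -/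
lemma exists_dual (hN : IsNorm N) (v : Fin d → ℝ) :
    ∃ ψ : (Fin d → ℝ) →ₗ[ℝ] ℝ, ψ v = N v ∧ ∀ y, ψ y ≤ N y := by
  by_cases hv : v = 0
  · exact ⟨0, by simp [hv, norm_zero hN], fun y => norm_nonneg' hN y⟩
  · set f := LinearPMap.mkSpanSingleton (K := ℝ) (L := ℝ) (σ := RingHom.id ℝ) v (N v) hv with hf
    have hdom : ∀ z : f.domain, ∃ a : ℝ, (z : Fin d → ℝ) = a • v := by
      intro z
      have hz2 : (z : Fin d → ℝ) ∈ (Submodule.span ℝ {v}) := z.2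
      obtain ⟨a, ha⟩ := Submodule.mem_span_singleton.1 hz2
      exact ⟨a, ha.symm⟩
    have hvdom : v ∈ f.domain := Submodule.mem_span_singleton_self v
    have hfle : ∀ z : f.domain, f z ≤ N z := by
      intro z
      obtain ⟨a, haz⟩ := hdom z
      have hz : z = ⟨a • v, Submodule.smul_mem _ a hvdom⟩ := by
        apply Subtype.ext; exact haz
      rw [hz]
      have happ : f ⟨a • v, Submodule.smul_mem _ a hvdom⟩ = a • N v :=
        LinearPMap.mkSpanSingleton'_apply v (N v) _ a _
      rw [happ]
      show a • N v ≤ N (a • v)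
      rw [hN.2.1]
      have h7 : a • N v = a * N v := rfl
      rw [h7]
      exact mul_le_mul_of_nonneg_right (le_abs_self a) (norm_nonneg' hN v)
    obtain ⟨g, hg1, hg2⟩ := exists_extension_of_le_sublinear f N
      (fun c hc y => by rw [hN.2.1, abs_of_pos hc]) hN.1 hfle
    refine ⟨g, ?_, hg2⟩
    have := hg1 ⟨v, hvdom⟩
    rw [this]
    exact LinearPMap.mkSpanSingleton_apply ℝ ℝ hv (N v)

open NormedSpace in
lemma substep (hN : IsNorm N) (B : Matrix (Fin d) (Fin d) ℝ) {h : ℝ} (hh : 0 < h)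
    (hcontr : ∀ z, N ((exp (h • B)).mulVec z) ≤ N z)
    {cB : ℝ} (hcB0 : 0 ≤ cB)
    (hcB : ∀ y, N ((B ^ 2).mulVec y) ≤ cB * N y) (hcB8 : cB * h ^ 2 < 8)
    (z : Fin d → ℝ) {r : ℝ} (hr : r ∈ Set.Icc 0 h) :
    N ((exp (r • B)).mulVec z) ≤ (1 - cB * h ^ 2 / 8)⁻¹ * N z := by
  set f : ℝ → (Fin d → ℝ) := fun u => (exp (u • B)).mulVec z with hfdef
  have hderiv : ∀ s : ℝ, HasDerivAt f (B.mulVec (f s)) s := by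
    intro s
    letI : NormedRing (Matrix (Fin d) (Fin d) ℝ) := Matrix.linftyOpNormedRing
    letI : NormedAlgebra ℝ (Matrix (Fin d) (Fin d) ℝ) := Matrix.linftyOpNormedAlgebra
    have h1 := hasDerivAt_exp_smul_const' (𝕂 := ℝ) B s
    let Φ : Matrix (Fin d) (Fin d) ℝ →ₗ[ℝ] (Fin d → ℝ) :=
      { toFun := fun M => M.mulVec z
        map_add' := fun M M' => Matrix.add_mulVec M M' z
        map_smul' := fun a M => Matrix.smul_mulVec a M z }
    have h2 := (Φ.toContinuousLinearMap.hasFDerivAt).comp_hasDerivAt s h1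
    have h3 : HasDerivAt f ((B * exp (s • B)).mulVec z) s := h2
    rw [← Matrix.mulVec_mulVec] at h3
    exact h3
  have hcont : Continuous f := by
    rw [continuous_iff_continuousAt]; exact fun s => (hderiv s).continuousAt
  have hNf : Continuous fun u => N (f u) := (norm_continuous hN).comp hcont
  obtain ⟨s₀, hs₀, hmax⟩ := isCompact_Icc.exists_isMaxOn (Set.nonempty_Icc.2 hh.le)
    hNf.continuousOn
  set Mx := N (f s₀) with hMxdef
  have hMle : ∀ s ∈ Set.Icc (0:ℝ) h, N (f s) ≤ Mx := fun s hs => hmax hs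
  have hMx0 : 0 ≤ Mx := norm_nonneg' hN _
  have hf0 : f 0 = z := by
    simp only [f, zero_smul, exp_zero, Matrix.one_mulVec]
  have hfh : N (f h) ≤ N z := hcontr z
  have key : ∀ r' ∈ Set.Icc (0:ℝ) h, N (f r') ≤ N z + cB * Mx * h ^ 2 / 8 := by
    intro r' hr'
    set ℓ : Fin d → ℝ := (1 - r'/h) • z + (r'/h) • f h with hℓdef
    obtain ⟨ψ, hψv, hψle⟩ := exists_dual hN (f r' - ℓ)
    set ψc : (Fin d → ℝ) →L[ℝ] ℝ := ψ.toContinuousLinearMap with hψcdef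
    have hψc : ∀ y, ψc y = ψ y := fun y => rfl
    set C : ℝ := (ψ (f h) - ψ z)/h with hCdef
    set Θ : (Fin d → ℝ) →L[ℝ] (Fin d → ℝ) := LinearMap.toContinuousLinearMap B.mulVecLin
      with hΘdef
    have hΘ : ∀ y, Θ y = B.mulVec y := fun y => Matrix.mulVecLin_apply B y
    set g : ℝ → ℝ := fun u => ψc (f u) - (ψ z + u * C) with hgdef
    set g' : ℝ → ℝ := fun u => ψc (B.mulVec (f u)) - C with hg'def
    set g'' : ℝ → ℝ := fun u => ψc (B.mulVec (B.mulVec (f u))) with hg''def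
    have hg' : ∀ s, HasDerivAt g (g' s) s := by
      intro s
      have h1 := ψc.hasFDerivAt.comp_hasDerivAt s (hderiv s)
      have h2 : HasDerivAt (fun u : ℝ => ψ z + u * C) C s :=
        (hasDerivAt_mul_const C).const_add (ψ z)
      exact h1.sub h2
    have hg'' : ∀ s, HasDerivAt g' (g'' s) s := by
      intro s
      have h1 := (ψc.comp Θ).hasFDerivAt.comp_hasDerivAt s (hderiv s)
      have h2 : HasDerivAt (fun u : ℝ => (ψc.comp Θ) (f u) - C)
          ((ψc.comp Θ) (B.mulVec (f s))) s := h1.sub_const C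
      have h3 : (fun u : ℝ => (ψc.comp Θ) (f u) - C) = g' := by
        funext u; simp [g', hΘ]
      have h4 : (ψc.comp Θ) (B.mulVec (f s)) = g'' s := by simp [g'', hΘ]
      rw [h3, h4] at h2; exact h2
    -- the parabola
    set p : ℝ → ℝ := fun u => cB * Mx * (u * (h - u) / 2) with hpdef
    set p' : ℝ → ℝ := fun u => cB * Mx * ((h - 2*u) / 2) with hp'def
    have hp' : ∀ s, HasDerivAt p (p' s) s := by
      intro s
      have h1 : HasDerivAt (fun u : ℝ => u * (h - u)) (1 * (h - s) + s * (0 - 1)) s :=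
        (hasDerivAt_id s).mul ((hasDerivAt_const s h).sub (hasDerivAt_id s))
      have h2 := (h1.div_const 2).const_mul (cB * Mx)
      exact h2.congr_deriv (by ring)
    set q : ℝ → ℝ := fun u => g u - p u with hqdef
    have hq' : ∀ s, HasDerivAt q (g' s - p' s) s := fun s => (hg' s).sub (hp' s)
    have hq'' : ∀ s, HasDerivAt (fun u => g' u - p' u) (g'' s + cB * Mx) s := by
      intro s
      have h1 : HasDerivAt p' (cB * Mx * (-1)) s := by
        have h0 : HasDerivAt (fun u : ℝ => (h - 2*u) / 2) ((0 - 2*1) / 2) s := by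
          exact (((hasDerivAt_const s h).sub ((hasDerivAt_id s).const_mul 2)).div_const 2)
        have := h0.const_mul (cB * Mx)
        exact this.congr_deriv (by ring)
      have h2 := (hg'' s).sub h1
      exact h2.congr_deriv (by ring)
    have hconv : ConvexOn ℝ (Set.Icc (0:ℝ) h) q := by
      apply convexOn_of_hasDerivWithinAt2_nonneg (convex_Icc 0 h)
        (f' := fun u => g' u - p' u) (f'' := fun u => g'' u + cB * Mx)
      · exact Continuous.continuousOn (by
          rw [continuous_iff_continuousAt]; exact fun s => (hq' s).continuousAt)
      · exact fun s _ => (hq' s).hasDerivWithinAt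
      · exact fun s _ => (hq'' s).hasDerivWithinAt
      · intro s hs
        rw [interior_Icc] at hs
        have hsI : s ∈ Set.Icc (0:ℝ) h := Set.mem_Icc_of_Ioo hs
        have hBB : B.mulVec (B.mulVec (f s)) = (B ^ 2).mulVec (f s) := by
          rw [sq, ← Matrix.mulVec_mulVec]
        have hlow : -(g'' s) ≤ cB * Mx := by
          have h1 : ψ (-(B.mulVec (B.mulVec (f s)))) ≤ N (-(B.mulVec (B.mulVec (f s)))) :=
            hψle _
          rw [norm_neg hN, map_neg] at h1
          have h2 : N (B.mulVec (B.mulVec (f s))) ≤ cB * N (f s) := by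
            rw [hBB]; exact hcB _
          have h3 : cB * N (f s) ≤ cB * Mx :=
            mul_le_mul_of_nonneg_left (hMle s hsI) hcB0
          calc -(g'' s) = -(ψ (B.mulVec (B.mulVec (f s)))) := by simp [g'', hψc]
            _ ≤ N (B.mulVec (B.mulVec (f s))) := h1
            _ ≤ cB * Mx := le_trans h2 h3
        linarith
    have hq0 : q 0 = 0 := by
      simp [q, g, p, hf0, hψc]
    have hqh : q h = 0 := by
      have : g h = 0 := by
        simp only [g, C, hψc]
        field_simp
        ring
      simp [q, this, p]
    have hqr : q r' ≤ 0 := by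
      have h0m : (0:ℝ) ∈ Set.Icc (0:ℝ) h := Set.left_mem_Icc.2 hh.le
      have hhm : h ∈ Set.Icc (0:ℝ) h := Set.right_mem_Icc.2 hh.le
      have ha : (0:ℝ) ≤ 1 - r'/h := by
        have : r'/h ≤ 1 := (div_le_one hh).2 hr'.2
        linarith
      have hb : (0:ℝ) ≤ r'/h := div_nonneg hr'.1 hh.le
      have hab : (1 - r'/h) + r'/h = 1 := by ring
      have := hconv.2 h0m hhm ha hb hab
      have harg : (1 - r'/h) • (0:ℝ) + (r'/h) • h = r' := by
        simp only [smul_eq_mul]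
        field_simp
        ring
      rw [harg] at this
      rw [hq0, hqh] at this
      simpa using this
    -- g r' = N (f r' - ℓ)
    have hgr : g r' = N (f r' - ℓ) := by
      rw [← hψv]
      have : ψ (f r' - ℓ) = ψ (f r') - ((1 - r'/h) * ψ z + (r'/h) * ψ (f h)) := by
        rw [map_sub, hℓdef, map_add, map_smul, map_smul]
        simp [smul_eq_mul]
      rw [this, hgdef]
      show ψc (f r') - (ψ z + r' * C) = _
      rw [hψc, hCdef]
      field_simp
      ring
    have hquad : r' * (h - r') / 2 ≤ h ^ 2 / 8 := by nlinarith [sq_nonneg (h - 2*r')]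
    have hrem : N (f r' - ℓ) ≤ cB * Mx * h ^ 2 / 8 := by
      have h1 : g r' ≤ p r' := by have := hqr; simp only [q] at this; linarith
      have h2 : p r' ≤ cB * Mx * h ^ 2 / 8 := by
        have := mul_le_mul_of_nonneg_left hquad (mul_nonneg hcB0 hMx0)
        calc p r' = cB * Mx * (r' * (h - r') / 2) := rfl
          _ ≤ cB * Mx * (h ^ 2 / 8) := this
          _ = cB * Mx * h ^ 2 / 8 := by ring
      rw [← hgr]; exact le_trans h1 h2
    have hℓle : N ℓ ≤ N z := by
      have h1 : N ℓ ≤ N ((1 - r'/h) • z) + N ((r'/h) • f h) := hN.1 _ _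
      rw [hN.2.1, hN.2.1] at h1
      have ha : (0:ℝ) ≤ 1 - r'/h := by
        have : r'/h ≤ 1 := (div_le_one hh).2 hr'.2
        linarith
      have hb : (0:ℝ) ≤ r'/h := div_nonneg hr'.1 hh.le
      rw [abs_of_nonneg ha, abs_of_nonneg hb] at h1
      have h2 : (r'/h) * N (f h) ≤ (r'/h) * N z := mul_le_mul_of_nonneg_left hfh hb
      have h3 : (1 - r'/h) * N z + (r'/h) * N z = N z := by ring
      linarith
    have hsplit : N (f r') ≤ N ℓ + N (f r' - ℓ) := by
      have := hN.1 ℓ (f r' - ℓ)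
      rw [add_sub_cancel] at this
      exact this
    linarith
  have hs0key := key s₀ hs₀
  have hden : 0 < 1 - cB * h ^ 2 / 8 := by linarith
  have hMxle : Mx ≤ (1 - cB * h ^ 2 / 8)⁻¹ * N z := by
    rw [le_inv_mul_iff₀ hden]
    nlinarith
  exact le_trans (hMle r hr) hMxle

open NormedSpace in
lemma expSplit (B : Matrix (Fin d) (Fin d) ℝ) (r σ : ℝ) :
    exp (r • (B + σ • (1 : Matrix (Fin d) (Fin d) ℝ))) = Real.exp (r * σ) • exp (r • B) := by
  letI : NormedRing (Matrix (Fin d) (Fin d) ℝ) := Matrix.linftyOpNormedRing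
  letI : NormedAlgebra ℝ (Matrix (Fin d) (Fin d) ℝ) := Matrix.linftyOpNormedAlgebra
  letI : NormedAlgebra ℚ (Matrix (Fin d) (Fin d) ℝ) := Matrix.linftyOpNormedAlgebra
  have hcomm : Commute (r • B) ((r * σ) • (1 : Matrix (Fin d) (Fin d) ℝ)) :=
    (Commute.one_right B).smul_left r |>.smul_right (r * σ)
  have h0 : r • (B + σ • (1 : Matrix (Fin d) (Fin d) ℝ)) = r • B + (r * σ) • 1 := by
    rw [smul_add, smul_smul]
  have h1 : ((r * σ) • (1 : Matrix (Fin d) (Fin d) ℝ)) = algebraMap ℝ _ (r * σ) := by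
    rw [Algebra.algebraMap_eq_smul_one]
  have key : exp (r • (B + σ • (1 : Matrix (Fin d) (Fin d) ℝ))) = Real.exp (r * σ) • exp (r • B) := by
    rw [h0]
    refine (exp_add_of_commute hcomm).trans ?_
    rw [h1, ← algebraMap_exp_comm, ← congrFun Real.exp_eq_exp_ℝ,
      Algebra.algebraMap_eq_smul_one, mul_smul_one]
    exact rfl
  exact key

open NormedSpace in
lemma expPow (A : Matrix (Fin d) (Fin d) ℝ) (h : ℝ) (q : ℕ) :
    exp (((q : ℝ) * h) • A) = (exp (h • A)) ^ q := by
  letI : NormedRing (Matrix (Fin d) (Fin d) ℝ) := Matrix.linftyOpNormedRing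
  letI : NormedAlgebra ℝ (Matrix (Fin d) (Fin d) ℝ) := Matrix.linftyOpNormedAlgebra
  letI : NormedAlgebra ℚ (Matrix (Fin d) (Fin d) ℝ) := Matrix.linftyOpNormedAlgebra
  have key : exp (((q : ℝ) * h) • A) = (exp (h • A)) ^ q := by
    rw [← smul_smul, Nat.cast_smul_eq_nsmul]
    exact exp_nsmul q (h • A)
  exact key

open NormedSpace in
lemma expAdd (A : Matrix (Fin d) (Fin d) ℝ) (r u : ℝ) :
    exp ((r + u) • A) = exp (r • A) * exp (u • A) := by
  letI : NormedRing (Matrix (Fin d) (Fin d) ℝ) := Matrix.linftyOpNormedRing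
  letI : NormedAlgebra ℝ (Matrix (Fin d) (Fin d) ℝ) := Matrix.linftyOpNormedAlgebra
  letI : NormedAlgebra ℚ (Matrix (Fin d) (Fin d) ℝ) := Matrix.linftyOpNormedAlgebra
  have key : exp ((r + u) • A) = exp (r • A) * exp (u • A) := by
    rw [add_smul]
    exact exp_add_of_commute ((Commute.refl A).smul_left r |>.smul_right u)
  exact key

open NormedSpace in
lemma growth (hN : IsNorm N) (A : Matrix (Fin d) (Fin d) ℝ) {h σ : ℝ} (hh : 0 < h)
    (hstep : ∀ z, N ((exp (h • A)).mulVec z) ≤ Real.exp (σ * h) * N z)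
    {cB : ℝ} (hcB0 : 0 ≤ cB)
    (hcB : ∀ y, N (((A - σ • (1 : Matrix (Fin d) (Fin d) ℝ)) ^ 2).mulVec y) ≤ cB * N y)
    (hcB8 : cB * h ^ 2 < 8)
    (z : Fin d → ℝ) {τ : ℝ} (hτ : 0 ≤ τ) :
    N ((exp (τ • A)).mulVec z) ≤
      Real.exp (σ * τ) * ((1 - cB * h ^ 2 / 8)⁻¹ * N z) := by
  set ρ : ℝ := (1 - cB * h ^ 2 / 8)⁻¹ with hρdef
  have hden : 0 < 1 - cB * h ^ 2 / 8 := by linarith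
  have hρ0 : 0 < ρ := inv_pos.2 hden
  set B : Matrix (Fin d) (Fin d) ℝ := A - σ • 1 with hBdef
  have hAB : B + σ • (1 : Matrix (Fin d) (Fin d) ℝ) = A := by
    rw [hBdef, sub_add_cancel]
  have hsplit : ∀ r : ℝ, exp (r • A) = Real.exp (r * σ) • exp (r • B) := by
    intro r; rw [← hAB]; exact expSplit B r σ
  have hBcontr : ∀ w, N ((exp (h • B)).mulVec w) ≤ N w := by
    intro w
    have h1 : exp (h • B) = Real.exp (-(h * σ)) • exp (h • A) := by
      rw [hsplit h, smul_smul, ← Real.exp_add, neg_add_cancel, Real.exp_zero, one_smul]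
    rw [h1, Matrix.smul_mulVec, hN.2.1, abs_of_pos (Real.exp_pos _)]
    calc Real.exp (-(h * σ)) * N ((exp (h • A)).mulVec w)
        ≤ Real.exp (-(h * σ)) * (Real.exp (σ * h) * N w) :=
          mul_le_mul_of_nonneg_left (hstep w) (Real.exp_pos _).le
      _ = N w := by rw [← mul_assoc, ← Real.exp_add]; ring_nf; simp
  have hsub : ∀ w, ∀ r ∈ Set.Icc (0:ℝ) h, N ((exp (r • A)).mulVec w) ≤
      Real.exp (σ * r) * (ρ * N w) := by
    intro w r hrI
    rw [hsplit r, Matrix.smul_mulVec, hN.2.1, abs_of_pos (Real.exp_pos _), mul_comm r σ]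
    exact mul_le_mul_of_nonneg_left (substep hN B hh hBcontr hcB0 hcB hcB8 w hrI)
      (Real.exp_pos _).le
  have hiter : ∀ q : ℕ, ∀ w, N (((exp (h • A)) ^ q).mulVec w) ≤
      Real.exp (σ * ((q : ℝ) * h)) * N w := by
    intro q
    induction q with
    | zero => intro w; simp [Matrix.one_mulVec]
    | succ q ih =>
      intro w
      rw [pow_succ, ← Matrix.mulVec_mulVec]
      calc N ((exp (h • A) ^ q).mulVec ((exp (h • A)).mulVec w))
          ≤ Real.exp (σ * ((q : ℝ) * h)) * N ((exp (h • A)).mulVec w) := ih _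
        _ ≤ Real.exp (σ * ((q : ℝ) * h)) * (Real.exp (σ * h) * N w) :=
            mul_le_mul_of_nonneg_left (hstep w) (Real.exp_pos _).le
        _ = Real.exp (σ * (((q:ℕ)+1 : ℝ) * h)) * N w := by
            rw [← mul_assoc, ← Real.exp_add]; ring_nf
      rw [Nat.cast_add, Nat.cast_one]
  set q : ℕ := ⌊τ / h⌋₊ with hqdef
  set r : ℝ := τ - (q : ℝ) * h with hrdef
  have hq1 : (q : ℝ) * h ≤ τ := by
    have := Nat.floor_le (div_nonneg hτ hh.le)
    calc (q : ℝ) * h ≤ (τ / h) * h := mul_le_mul_of_nonneg_right this hh.le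
      _ = τ := by field_simp
  have hr1 : 0 ≤ r := by rw [hrdef]; linarith
  have hr2 : r ≤ h := by
    have h1 : τ / h < (q : ℝ) + 1 := Nat.lt_floor_add_one (τ / h)
    have h2 : τ < ((q : ℝ) + 1) * h := by
      calc τ = (τ / h) * h := by field_simp
        _ < ((q : ℝ) + 1) * h := by exact mul_lt_mul_of_pos_right h1 hh
    rw [hrdef]; nlinarith
  have hτeq : τ = r + (q : ℝ) * h := by rw [hrdef]; ring
  have hdecomp : exp (τ • A) = exp (r • A) * (exp (h • A)) ^ q := by
    rw [hτeq, expAdd, expPow]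
  rw [hdecomp, ← Matrix.mulVec_mulVec]
  calc N ((exp (r • A)).mulVec (((exp (h • A)) ^ q).mulVec z))
      ≤ Real.exp (σ * r) * (ρ * N (((exp (h • A)) ^ q).mulVec z)) :=
        hsub _ r ⟨hr1, hr2⟩
    _ ≤ Real.exp (σ * r) * (ρ * (Real.exp (σ * ((q : ℝ) * h)) * N z)) := by
        refine mul_le_mul_of_nonneg_left (mul_le_mul_of_nonneg_left (hiter q z) hρ0.le)
          (Real.exp_pos _).le
    _ = Real.exp (σ * τ) * (ρ * N z) := by
        rw [hτeq]; rw [mul_add σ r, Real.exp_add]; ring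

end TBE

/-- **Trajectory bound via an extremal multinorm.**
`A 0, …, A (n-1)` are `d×d` real matrices, `m > 0` is the dwell time, `0 < h ≤ m` the
discretization step, and the norms `Nm j` form an extremal multinorm datum for the
`h`-discretization with value `σh`, i.e. `Nm j (e^{hA_j} x) ≤ e^{σh·h}·Nm j x` and
`Nm j (e^{mA_j} x) ≤ e^{σh·m}·Nm i x` for `i ≠ j`.  With
`c = max_j ‖(A_j − σh·I)²‖_j` assumed to satisfy `c·h² < 8`, and
`α = σh − (1/m)·ln(1 − c·h²/8)`, every trajectory `x` of the switched system with dwell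
time at least `m` — the switching times being `t 0 = 0 < t 1 < t 2 < ⋯` (the number of
bounded switching intervals is `L : ℕ∞`; if `L = L'` is finite the last interval is
`[t L', ∞)`) and the modes `j k` — satisfies:
(i) for every `k < L` and every `s ∈ [t k + m, t (k+1)]`,
    `Nm (j k) (x s) ≤ e^{α s} · Nm (j 0) (x 0)`; and
(ii) for any fixed norm `Nn` on `ℝ^d` there is a constant `C ≥ 0` with
    `Nn (x s) ≤ C·e^{α s}` for all `s ≥ 0`. -/
theorem trajectory_bound_of_extremal_multinorm {d n : ℕ} (hn : 0 < n)
    (A : Fin n → Matrix (Fin d) (Fin d) ℝ)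
    (m h σh : ℝ) (hm : 0 < m) (hh : 0 < h) (hhm : h ≤ m)
    (Nm : Fin n → (Fin d → ℝ) → ℝ) (hNm : ∀ j, IsNorm (Nm j))
    (hext₁ : ∀ (j : Fin n) (x : Fin d → ℝ),
      Nm j ((NormedSpace.exp (h • A j)).mulVec x) ≤ Real.exp (σh * h) * Nm j x)
    (hext₂ : ∀ (i j : Fin n), i ≠ j → ∀ x : Fin d → ℝ,
      Nm j ((NormedSpace.exp (m • A j)).mulVec x) ≤ Real.exp (σh * m) * Nm i x)
    (c : ℝ)
    (hc : c = ⨆ j : Fin n, opNorm (Nm j) ((A j - σh • (1 : Matrix (Fin d) (Fin d) ℝ)) ^ 2))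
    (hch : c * h ^ 2 < 8)
    (α : ℝ) (hα : α = σh - (1 / m) * Real.log (1 - c * h ^ 2 / 8))
    (x : ℝ → (Fin d → ℝ)) (L : ℕ∞) (t : ℕ → ℝ) (j : ℕ → Fin n)
    (ht0 : t 0 = 0)
    (hdwell : ∀ k : ℕ, (k : ℕ∞) < L → m ≤ t (k + 1) - t k)
    (hmode : ∀ k : ℕ, (k : ℕ∞) < L → j (k + 1) ≠ j k)
    (htraj : ∀ k : ℕ, (k : ℕ∞) < L → ∀ s ∈ Set.Icc (t k) (t (k + 1)),
      x s = (NormedSpace.exp ((s - t k) • A (j k))).mulVec (x (t k)))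
    (hlast : ∀ L' : ℕ, L = (L' : ℕ∞) → ∀ s : ℝ, t L' ≤ s →
      x s = (NormedSpace.exp ((s - t L') • A (j L'))).mulVec (x (t L')))
    (hinf : L = ⊤ → Filter.Tendsto t Filter.atTop Filter.atTop) :
    (∀ k : ℕ, (k : ℕ∞) < L → ∀ s ∈ Set.Icc (t k + m) (t (k + 1)),
      Nm (j k) (x s) ≤ Real.exp (α * s) * Nm (j 0) (x 0)) ∧
    (∀ Nn : (Fin d → ℝ) → ℝ, IsNorm Nn →
      ∃ C : ℝ, 0 ≤ C ∧ ∀ s : ℝ, 0 ≤ s → Nn (x s) ≤ C * Real.exp (α * s)) := by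
  classical
  haveI : Nonempty (Fin n) := ⟨⟨0, hn⟩⟩
  have hN00 : 0 ≤ Nm (j 0) (x 0) := TBE.norm_nonneg' (hNm (j 0)) _
  -- c ≥ 0 and per-mode bound
  have hbdd : BddAbove (Set.range fun i : Fin n =>
      opNorm (Nm i) ((A i - σh • (1 : Matrix (Fin d) (Fin d) ℝ)) ^ 2)) :=
    Set.Finite.bddAbove (Set.finite_range _)
  have hcj : ∀ i : Fin n,
      opNorm (Nm i) ((A i - σh • (1 : Matrix (Fin d) (Fin d) ℝ)) ^ 2) ≤ c := by
    intro i; rw [hc]; exact le_ciSup hbdd i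
  have hc0 : 0 ≤ c :=
    le_trans (TBE.opNorm_spec (hNm ⟨0, hn⟩) _).1 (hcj ⟨0, hn⟩)
  have hcB : ∀ i : Fin n, ∀ y,
      Nm i (((A i - σh • (1 : Matrix (Fin d) (Fin d) ℝ)) ^ 2).mulVec y) ≤ c * Nm i y := by
    intro i y
    calc Nm i (((A i - σh • (1 : Matrix (Fin d) (Fin d) ℝ)) ^ 2).mulVec y)
        ≤ opNorm (Nm i) ((A i - σh • (1 : Matrix (Fin d) (Fin d) ℝ)) ^ 2) * Nm i y :=
          (TBE.opNorm_spec (hNm i) _).2 y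
      _ ≤ c * Nm i y := mul_le_mul_of_nonneg_right (hcj i) (TBE.norm_nonneg' (hNm i) y)
  set ρ : ℝ := (1 - c * h ^ 2 / 8)⁻¹ with hρdef
  have hden : 0 < 1 - c * h ^ 2 / 8 := by linarith
  have hρ0 : 0 < ρ := inv_pos.2 hden
  have hρ1 : 1 ≤ ρ := by
    rw [hρdef, one_le_inv_iff₀]
    constructor
    · exact hden
    · nlinarith [sq_nonneg h]
  have hlogρ0 : 0 ≤ Real.log ρ := Real.log_nonneg hρ1
  have hαald : α = σh + (1 / m) * Real.log ρ := by
    rw [hα, hρdef, Real.log_inv]; ring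
  have hαρ : ∀ u : ℝ, m ≤ u → Real.exp (σh * u) * ρ ≤ Real.exp (α * u) := by
    intro u hu
    have h1 : ρ = Real.exp (Real.log ρ) := (Real.exp_log hρ0).symm
    nth_rewrite 1 [h1]
    rw [← Real.exp_add]
    apply Real.exp_le_exp.2
    have h2 : α * u = σh * u + (u / m) * Real.log ρ := by
      rw [hαald]; field_simp
    rw [h2]
    have h3 : (1:ℝ) ≤ u / m := (one_le_div hm).2 hu
    nlinarith
  -- per-mode growth
  have hgrow : ∀ (i : Fin n) (w : Fin d → ℝ) (τ : ℝ), 0 ≤ τ →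
      Nm i ((NormedSpace.exp (τ • A i)).mulVec w) ≤
        Real.exp (σh * τ) * (ρ * Nm i w) := fun i w τ hτ =>
    TBE.growth (hNm i) (A i) hh (hext₁ i) hc0 (hcB i) hch w hτ
  -- key induction
  have hT : ∀ k : ℕ, (k : ℕ∞) ≤ L → ∀ u : ℝ, m ≤ u →
      Nm (j k) ((NormedSpace.exp (u • A (j k))).mulVec (x (t k))) ≤
        Real.exp (α * (t k + u)) * Nm (j 0) (x 0) := by
    intro k
    induction k with
    | zero =>
      intro _ u hu
      rw [ht0]
      calc Nm (j 0) ((NormedSpace.exp (u • A (j 0))).mulVec (x 0))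
          ≤ Real.exp (σh * u) * (ρ * Nm (j 0) (x 0)) :=
            hgrow (j 0) (x 0) u (le_trans hm.le hu)
        _ = (Real.exp (σh * u) * ρ) * Nm (j 0) (x 0) := by ring
        _ ≤ Real.exp (α * u) * Nm (j 0) (x 0) :=
            mul_le_mul_of_nonneg_right (hαρ u hu) hN00
        _ = Real.exp (α * (0 + u)) * Nm (j 0) (x 0) := by rw [zero_add]
    | succ k ih =>
      intro hkL u hu
      have hkk : ((k : ℕ∞)) < ((k + 1 : ℕ) : ℕ∞) := by exact_mod_cast Nat.lt_succ_self k
      have hkL' : (k : ℕ∞) < L := lt_of_lt_of_le hkk hkL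
      have hdk := hdwell k hkL'
      have htk : t k ≤ t (k + 1) := by linarith
      have hx1 : x (t (k + 1)) =
          (NormedSpace.exp ((t (k + 1) - t k) • A (j k))).mulVec (x (t k)) :=
        htraj k hkL' (t (k + 1)) ⟨htk, le_refl _⟩
      have hb1 : Nm (j k) (x (t (k + 1))) ≤
          Real.exp (α * t (k + 1)) * Nm (j 0) (x 0) := by
        rw [hx1]
        have hres := ih hkL'.le (t (k + 1) - t k) hdk
        have h2 : t k + (t (k + 1) - t k) = t (k + 1) := by ring
        rw [h2] at hres; exact hres
      have hudecomp : NormedSpace.exp (u • A (j (k + 1))) =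
          NormedSpace.exp ((u - m) • A (j (k + 1))) *
            NormedSpace.exp (m • A (j (k + 1))) := by
        rw [← TBE.expAdd, sub_add_cancel]
      rw [hudecomp, ← Matrix.mulVec_mulVec]
      have hEnonneg : 0 ≤ Real.exp (α * t (k + 1)) * Nm (j 0) (x 0) :=
        mul_nonneg (Real.exp_pos _).le hN00
      calc Nm (j (k + 1)) ((NormedSpace.exp ((u - m) • A (j (k + 1)))).mulVec
            ((NormedSpace.exp (m • A (j (k + 1)))).mulVec (x (t (k + 1)))))
          ≤ Real.exp (σh * (u - m)) *
              (ρ * Nm (j (k + 1)) ((NormedSpace.exp (m • A (j (k + 1)))).mulVec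
                (x (t (k + 1))))) := hgrow _ _ _ (by linarith)
        _ ≤ Real.exp (σh * (u - m)) *
              (ρ * (Real.exp (σh * m) * Nm (j k) (x (t (k + 1))))) := by
            refine mul_le_mul_of_nonneg_left (mul_le_mul_of_nonneg_left ?_ hρ0.le)
              (Real.exp_pos _).le
            exact hext₂ (j k) (j (k + 1)) (hmode k hkL').symm (x (t (k + 1)))
        _ ≤ Real.exp (σh * (u - m)) *
              (ρ * (Real.exp (σh * m) * (Real.exp (α * t (k + 1)) * Nm (j 0) (x 0)))) := by
            refine mul_le_mul_of_nonneg_left (mul_le_mul_of_nonneg_left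
              (mul_le_mul_of_nonneg_left hb1 (Real.exp_pos _).le) hρ0.le)
              (Real.exp_pos _).le
        _ = (Real.exp (σh * u) * ρ) * (Real.exp (α * t (k + 1)) * Nm (j 0) (x 0)) := by
            rw [show σh * (u - m) = σh * u + (-(σh * m)) by ring, Real.exp_add,
              Real.exp_neg]
            field_simp
        _ ≤ Real.exp (α * u) * (Real.exp (α * t (k + 1)) * Nm (j 0) (x 0)) :=
            mul_le_mul_of_nonneg_right (hαρ u hu) hEnonneg
        _ = Real.exp (α * (t (k + 1) + u)) * Nm (j 0) (x 0) := by
            rw [show α * (t (k + 1) + u) = α * u + α * t (k + 1) by ring, Real.exp_add]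
            ring
  -- part (i)
  have part1 : ∀ k : ℕ, (k : ℕ∞) < L → ∀ s ∈ Set.Icc (t k + m) (t (k + 1)),
      Nm (j k) (x s) ≤ Real.exp (α * s) * Nm (j 0) (x 0) := by
    intro k hk s hs
    have h1 : t k ≤ s := le_trans (by linarith) hs.1
    rw [htraj k hk s ⟨h1, hs.2⟩]
    have hres := hT k hk.le (s - t k) (by linarith [hs.1])
    have h2 : t k + (s - t k) = s := by ring
    rw [h2] at hres; exact hres
  refine ⟨part1, ?_⟩
  -- endpoints bound
  have hend : ∀ k : ℕ, (k : ℕ∞) < L →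
      Nm (j k) (x (t (k + 1))) ≤ Real.exp (α * t (k + 1)) * Nm (j 0) (x 0) := by
    intro k hk
    have hdk := hdwell k hk
    have htk : t k ≤ t (k + 1) := by linarith
    rw [htraj k hk (t (k + 1)) ⟨htk, le_refl _⟩]
    have hres := hT k hk.le (t (k + 1) - t k) hdk
    have h2 : t k + (t (k + 1) - t k) = t (k + 1) := by ring
    rw [h2] at hres; exact hres
  -- norm comparison constants
  choose b hb0 hb using fun i : Fin n => TBE.norm_upper (hNm i)
  choose a ha0 ha using fun i : Fin n => TBE.norm_lower (hNm i)
  set K : ℝ := max 1 (⨆ p : Fin n × Fin n, b p.1 / a p.2) with hKdef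
  have hK1 : (1:ℝ) ≤ K := le_max_left _ _
  have hKle : ∀ (i i' : Fin n) (y : Fin d → ℝ), Nm i y ≤ K * Nm i' y := by
    intro i i' y
    have h1 : Nm i y ≤ (b i / a i') * Nm i' y := by
      calc Nm i y ≤ b i * ‖y‖ := hb i y
        _ ≤ b i * ((a i')⁻¹ * Nm i' y) := by
            refine mul_le_mul_of_nonneg_left ?_ (hb0 i)
            rw [le_inv_mul_iff₀ (ha0 i')]
            exact ha i' y
        _ = (b i / a i') * Nm i' y := by rw [div_eq_mul_inv]; ring
    have h2 : b i / a i' ≤ K := by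
      refine le_trans (le_ciSup (f := fun p : Fin n × Fin n => b p.1 / a p.2)
        (Set.Finite.bddAbove (Set.finite_range _)) (i, i')) (le_max_right _ _)
    exact le_trans h1 (mul_le_mul_of_nonneg_right h2 (TBE.norm_nonneg' (hNm i') y))
  -- master bound
  set C₀ : ℝ := Real.exp ((|σh| + |α|) * m) * (ρ * K) with hC₀def
  have hexpm1 : (1:ℝ) ≤ Real.exp ((|σh| + |α|) * m) :=
    Real.one_le_exp (by positivity)
  have hρK1 : (1:ℝ) ≤ ρ * K :=
    le_trans hK1 (le_mul_of_one_le_left (by linarith) hρ1)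
  have hC₀1 : (1:ℝ) ≤ C₀ :=
    le_trans hρK1 (le_mul_of_one_le_left (by linarith) hexpm1)
  have hC₀0 : (0:ℝ) ≤ C₀ := by linarith
  have hσα : ∀ u : ℝ, 0 ≤ u → u ≤ m →
      Real.exp (σh * u) ≤ Real.exp ((|σh| + |α|) * m) * Real.exp (α * u) := by
    intro u hu hum
    rw [← Real.exp_add]
    apply Real.exp_le_exp.2
    have h1 : σh * u - α * u ≤ (|σh| + |α|) * u := by
      nlinarith [le_abs_self σh, neg_abs_le σh, le_abs_self α, neg_abs_le α]
    have h2 : (|σh| + |α|) * u ≤ (|σh| + |α|) * m :=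
      mul_le_mul_of_nonneg_left hum (by positivity)
    linarith
  have hW : ∀ k : ℕ, (k : ℕ∞) ≤ L → ∀ u : ℝ, 0 ≤ u →
      Nm (j k) ((NormedSpace.exp (u • A (j k))).mulVec (x (t k))) ≤
        C₀ * (Real.exp (α * (t k + u)) * Nm (j 0) (x 0)) := by
    intro k hk u hu
    rcases le_or_gt m u with hum | hum
    · exact le_trans (hT k hk u hum)
        (le_mul_of_one_le_left (mul_nonneg (Real.exp_pos _).le hN00) hC₀1)
    · have hg := hgrow (j k) (x (t k)) u hu
      have hσαu := hσα u hu hum.le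
      have hkey : Nm (j k) (x (t k)) ≤ K * (Real.exp (α * t k) * Nm (j 0) (x 0)) := by
        rcases Nat.eq_zero_or_pos k with hk0 | hkpos
        · subst hk0
          rw [ht0, mul_zero, Real.exp_zero, one_mul]
          calc Nm (j 0) (x 0) = 1 * Nm (j 0) (x 0) := (one_mul _).symm
            _ ≤ K * Nm (j 0) (x 0) := mul_le_mul_of_nonneg_right hK1 hN00
        · obtain ⟨k', rfl⟩ : ∃ k', k = k' + 1 := ⟨k - 1, by omega⟩
          have hkk : ((k' : ℕ∞)) < ((k' + 1 : ℕ) : ℕ∞) := by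
            exact_mod_cast Nat.lt_succ_self k'
          have hk'L : (k' : ℕ∞) < L := lt_of_lt_of_le hkk hk
          exact le_trans (hKle (j (k' + 1)) (j k') (x (t (k' + 1))))
            (mul_le_mul_of_nonneg_left (hend k' hk'L) (by linarith))
      calc Nm (j k) ((NormedSpace.exp (u • A (j k))).mulVec (x (t k)))
          ≤ Real.exp (σh * u) * (ρ * Nm (j k) (x (t k))) := hg
        _ ≤ Real.exp (σh * u) * (ρ * (K * (Real.exp (α * t k) * Nm (j 0) (x 0)))) := by
            refine mul_le_mul_of_nonneg_left (mul_le_mul_of_nonneg_left hkey hρ0.le)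
              (Real.exp_pos _).le
        _ ≤ (Real.exp ((|σh| + |α|) * m) * Real.exp (α * u)) *
              (ρ * (K * (Real.exp (α * t k) * Nm (j 0) (x 0)))) := by
            refine mul_le_mul_of_nonneg_right hσαu ?_
            have := TBE.norm_nonneg' (hNm (j 0)) (x 0)
            positivity
        _ = C₀ * (Real.exp (α * (t k + u)) * Nm (j 0) (x 0)) := by
            rw [hC₀def, show α * (t k + u) = α * u + α * t k by ring, Real.exp_add]
            ring
  -- part (ii)
  intro Nn hNn
  obtain ⟨bn, hbn0, hbn⟩ := TBE.norm_upper hNn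
  set K₂ : ℝ := max 0 (⨆ i : Fin n, bn / a i) with hK₂def
  have hK₂0 : (0:ℝ) ≤ K₂ := le_max_left _ _
  have hK₂le : ∀ (i : Fin n) (y : Fin d → ℝ), Nn y ≤ K₂ * Nm i y := by
    intro i y
    have h1 : Nn y ≤ (bn / a i) * Nm i y := by
      calc Nn y ≤ bn * ‖y‖ := hbn y
        _ ≤ bn * ((a i)⁻¹ * Nm i y) := by
            refine mul_le_mul_of_nonneg_left ?_ hbn0
            rw [le_inv_mul_iff₀ (ha0 i)]
            exact ha i y
        _ = (bn / a i) * Nm i y := by rw [div_eq_mul_inv]; ring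
    have h2 : bn / a i ≤ K₂ := by
      refine le_trans (le_ciSup (f := fun i : Fin n => bn / a i)
        (Set.Finite.bddAbove (Set.finite_range _)) i) (le_max_right _ _)
    exact le_trans h1 (mul_le_mul_of_nonneg_right h2 (TBE.norm_nonneg' (hNm i) y))
  refine ⟨K₂ * (C₀ * Nm (j 0) (x 0)), by positivity, fun s hs => ?_⟩
  have hcase : ∃ k : ℕ, (k : ℕ∞) ≤ L ∧ t k ≤ s ∧
      x s = (NormedSpace.exp ((s - t k) • A (j k))).mulVec (x (t k)) := by
    by_cases hLtop : L = ⊤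
    · obtain ⟨Kb, hKb⟩ := Filter.eventually_atTop.1 ((hinf hLtop).eventually_gt_atTop s)
      have hP0 : t 0 ≤ s := by rw [ht0]; exact hs
      set kk := Nat.findGreatest (fun k => t k ≤ s) Kb with hkk
      have hPk : t kk ≤ s :=
        Nat.findGreatest_spec (P := fun k => t k ≤ s) (Nat.zero_le Kb) hP0
      have hnext : s < t (kk + 1) := by
        rcases le_or_gt (kk + 1) Kb with hle | hgt
        · by_contra hcon
          exact Nat.findGreatest_is_greatest (P := fun k => t k ≤ s)
            (Nat.lt_succ_self kk) hle (not_lt.1 hcon)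
        · exact hKb (kk + 1) (by omega)
      refine ⟨kk, by rw [hLtop]; exact le_top, hPk, ?_⟩
      exact htraj kk (by rw [hLtop]; exact lt_of_le_of_ne le_top (by simp)) s ⟨hPk, hnext.le⟩
    · obtain ⟨L', hL'⟩ : ∃ L' : ℕ, ((L' : ℕ∞)) = L := by
        refine ⟨ENat.lift L (lt_top_iff_ne_top.2 hLtop), ?_⟩
        exact ENat.coe_lift L (lt_top_iff_ne_top.2 hLtop)
      rcases le_or_gt (t L') s with hge | hlt
      · exact ⟨L', le_of_eq hL', hge, hlast L' hL'.symm s hge⟩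
      · have hP0 : t 0 ≤ s := by rw [ht0]; exact hs
        set kk := Nat.findGreatest (fun k => t k ≤ s) L' with hkk
        have hPk : t kk ≤ s :=
          Nat.findGreatest_spec (P := fun k => t k ≤ s) (Nat.zero_le L') hP0
        have hkkle : kk ≤ L' := Nat.findGreatest_le L'
        have hkklt : kk < L' := by
          rcases eq_or_lt_of_le hkkle with heq | hlt2
          · exfalso; rw [heq] at hPk; linarith
          · exact hlt2
        have hnext : s < t (kk + 1) := by
          by_contra hcon
          exact Nat.findGreatest_is_greatest (P := fun k => t k ≤ s)
            (Nat.lt_succ_self kk) hkklt (not_lt.1 hcon)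
        have hkkL : (kk : ℕ∞) < L := by
          rw [← hL']
          exact_mod_cast hkklt
        
        exact ⟨kk, hkkL.le, hPk, htraj kk hkkL s ⟨hPk, hnext.le⟩⟩
  obtain ⟨k, hkL, hks, hxs⟩ := hcase
  have hW' := hW k hkL (s - t k) (by linarith)
  rw [← hxs] at hW'
  have h2 : t k + (s - t k) = s := by ring
  rw [h2] at hW'
  calc Nn (x s) ≤ K₂ * Nm (j k) (x s) := hK₂le (j k) (x s)
    _ ≤ K₂ * (C₀ * (Real.exp (α * s) * Nm (j 0) (x 0))) :=
        mul_le_mul_of_nonneg_left hW' hK₂0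
    _ = (K₂ * (C₀ * Nm (j 0) (x 0))) * Real.exp (α * s) := by ring
end

section
/- Let A₁,…,A_n be d×d real matrices, m > 0, h > 0, α ∈ ℝ and C ≥ 1, and let ‖·‖ be a norm on ℝ^d. Suppose every trajectory x of the switched system for {A₁,…,A_n} with dwell time at least m satisfies ‖x(t)‖ ≤ C e^{α t} ‖x(0)‖ for all t ≥ 0. Then every admissible Markovian product Π of the h-discretization with total time T satisfies ‖Π‖ ≤ C e^{α T} (operator norm induced by ‖·‖); moreover, if Π is cyclic then its spectral radius satisfies ρ(Π) ≤ e^{α T}. -/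
open scoped ENNReal

/-- `x : ℝ → ℝ^d` is a trajectory of the switched system for the matrices `A j` with dwell
time at least `m`: there are switching times `0 = t 0 < t 1 < ⋯` (a finite or infinite
strictly increasing sequence, consecutive gaps at least `m`, tending to `∞` if infinite,
the last interval being `[t N, ∞)` if finite) and modes `j 0, j 1, …` with
`j (k+1) ≠ j k`, such that on each switching interval
`x s = e^{(s − t k) A (j k)} (x (t k))`. -/
def IsDwellTrajectory {d n : ℕ} (A : Fin n → Matrix (Fin d) (Fin d) ℝ) (m : ℝ)
    (x : ℝ → (Fin d → ℝ)) : Prop :=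
  (∃ (N : ℕ) (t : ℕ → ℝ) (j : ℕ → Fin n),
    t 0 = 0 ∧
    (∀ k < N, m ≤ t (k + 1) - t k) ∧
    (∀ k < N, j (k + 1) ≠ j k) ∧
    (∀ k < N, ∀ s ∈ Set.Icc (t k) (t (k + 1)),
      x s = (NormedSpace.exp ((s - t k) • A (j k))).mulVec (x (t k))) ∧
    (∀ s : ℝ, t N ≤ s →
      x s = (NormedSpace.exp ((s - t N) • A (j N))).mulVec (x (t N)))) ∨
  (∃ (t : ℕ → ℝ) (j : ℕ → Fin n),
    t 0 = 0 ∧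
    (∀ k : ℕ, m ≤ t (k + 1) - t k) ∧
    Filter.Tendsto t Filter.atTop Filter.atTop ∧
    (∀ k : ℕ, j (k + 1) ≠ j k) ∧
    (∀ k : ℕ, ∀ s ∈ Set.Icc (t k) (t (k + 1)),
      x s = (NormedSpace.exp ((s - t k) • A (j k))).mulVec (x (t k))))

/-- The admissible Markovian product of the `h`-discretization determined by the modes
`j 1, …, j p` (0-indexed: `j 0, …, j (p-1)`) and the exponents `N 1, …, N p`:
`PP = (e^{hA_{j_p}})^{N_p} e^{mA_{j_p}} ⋯ (e^{hA_{j_1}})^{N_1} e^{mA_{j_1}}`. -/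
noncomputable def markovProd {d n : ℕ} (A : Fin n → Matrix (Fin d) (Fin d) ℝ) (m h : ℝ)
    (j : ℕ → Fin n) (N : ℕ → ℕ) (p : ℕ) : Matrix (Fin d) (Fin d) ℝ :=
  (((List.range p).map fun s =>
    (NormedSpace.exp (h • A (j s))) ^ (N s) * NormedSpace.exp (m • A (j s))).reverse).prod

/-- The total time `T = Σ_{s=1}^p (m + N_s h)` of an admissible Markovian product. -/
noncomputable def markovTime (m h : ℝ) (N : ℕ → ℕ) (p : ℕ) : ℝ :=
  ∑ s ∈ Finset.range p, (m + (N s : ℝ) * h)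

namespace MarkovAux

variable {d n : ℕ} (A : Fin n → Matrix (Fin d) (Fin d) ℝ)

lemma isNorm_zero {Nn : (Fin d → ℝ) → ℝ} (hNn : IsNorm Nn) : Nn 0 = 0 := by
  have := hNn.2.1 0 0
  simpa using this

lemma isNorm_nonneg {Nn : (Fin d → ℝ) → ℝ} (hNn : IsNorm Nn) (x : Fin d → ℝ) : 0 ≤ Nn x := by
  have h1 := hNn.1 x (-x)
  have h2 : Nn (-x) = Nn x := by
    have := hNn.2.1 (-1) x; simpa using this
  have h3 : Nn (x + -x) = 0 := by rw [add_neg_cancel, isNorm_zero hNn]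
  linarith

lemma exp_block (B : Matrix (Fin d) (Fin d) ℝ) (m h : ℝ) (N : ℕ) :
    NormedSpace.exp ((m + (N : ℝ) * h) • B) =
      (NormedSpace.exp (h • B)) ^ N * NormedSpace.exp (m • B) := by
  have hc : Commute (((N : ℝ) * h) • B) (m • B) :=
    ((Commute.refl B).smul_left _).smul_right _
  have h1 : (m + (N : ℝ) * h) • B = ((N : ℝ) * h) • B + m • B := by
    rw [← add_smul]; ring_nf
  rw [h1, Matrix.exp_add_of_commute _ _ hc]
  congr 1
  have h2 : ((N : ℝ) * h) • B = N • (h • B) := by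
    rw [← Nat.cast_smul_eq_nsmul ℝ N (h • B), smul_smul]
  rw [h2, Matrix.exp_nsmul]

variable (A : Fin n → Matrix (Fin d) (Fin d) ℝ)

lemma markovProd_zero (m h : ℝ) (j : ℕ → Fin n) (N : ℕ → ℕ) :
    markovProd A m h j N 0 = 1 := by simp [markovProd]

lemma markovProd_succ (m h : ℝ) (j : ℕ → Fin n) (N : ℕ → ℕ) (k : ℕ) :
    markovProd A m h j N (k + 1) =
      ((NormedSpace.exp (h • A (j k))) ^ (N k) * NormedSpace.exp (m • A (j k))) *
        markovProd A m h j N k := by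
  simp [markovProd, List.range_succ]

lemma markovTime_succ (m h : ℝ) (N : ℕ → ℕ) (k : ℕ) :
    markovTime m h N (k + 1) = markovTime m h N k + (m + (N k : ℝ) * h) :=
  Finset.sum_range_succ _ _

lemma markovTime_zero (m h : ℝ) (N : ℕ → ℕ) : markovTime m h N 0 = 0 := by
  simp [markovTime]

lemma markovTime_strictMono {m h : ℝ} (hm : 0 < m) (hh : 0 < h) (N : ℕ → ℕ) :
    StrictMono (markovTime m h N) := by
  apply strictMono_nat_of_lt_succ
  intro k
  rw [markovTime_succ]
  have : 0 < m + (N k : ℝ) * h := by positivity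
  linarith

lemma vec_bound (m h α C : ℝ) (hm : 0 < m) (hh : 0 < h)
    (Nn : (Fin d → ℝ) → ℝ) (hNn : IsNorm Nn)
    (hbound : ∀ x : ℝ → (Fin d → ℝ), IsDwellTrajectory A m x →
      ∀ s : ℝ, 0 ≤ s → Nn (x s) ≤ C * Real.exp (α * s) * Nn (x 0))
    (p : ℕ) (hp : 0 < p) (j : ℕ → Fin n) (N : ℕ → ℕ)
    (hadm : ∀ s : ℕ, s + 1 < p → j (s + 1) ≠ j s) (x0 : Fin d → ℝ) :
    Nn ((markovProd A m h j N p).mulVec x0) ≤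
      C * Real.exp (α * markovTime m h N p) * Nn x0 := by
  classical
  set τ : ℕ → ℝ := markovTime m h N with hτdef
  have hτmono : StrictMono τ := markovTime_strictMono hm hh N
  have hτ0 : τ 0 = 0 := markovTime_zero m h N
  set blk : ℝ → ℕ := fun s => ((Finset.range (p - 1)).filter (fun k => τ (k + 1) ≤ s)).card
    with hblkdef
  set P : ℕ → Matrix (Fin d) (Fin d) ℝ := markovProd A m h j N with hPdef
  set x : ℝ → Fin d → ℝ := fun s =>
    (NormedSpace.exp ((s - τ (blk s)) • A (j (blk s)))).mulVec ((P (blk s)).mulVec x0)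
    with hxdef
  -- computing blk
  have hblk : ∀ (s : ℝ) (k : ℕ), k ≤ p - 1 → τ k ≤ s → (s < τ (k + 1) ∨ k = p - 1) →
      blk s = k := by
    intro s k hk hks hcase
    have : (Finset.range (p - 1)).filter (fun l => τ (l + 1) ≤ s) = Finset.range k := by
      ext l
      simp only [Finset.mem_filter, Finset.mem_range]
      constructor
      · rintro ⟨hl, hls⟩
        rcases hcase with hlt | rfl
        · have : τ (l + 1) < τ (k + 1) := lt_of_le_of_lt hls hlt
          have := hτmono.lt_iff_lt.mp this
          omega
        · exact hl
      · intro hl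
        refine ⟨by omega, ?_⟩
        have : τ (l + 1) ≤ τ k := hτmono.monotone (by omega)
        linarith
    rw [hblkdef]
    simp only [this, Finset.card_range]
  -- value at switching times
  have hxτ : ∀ k : ℕ, k ≤ p - 1 → x (τ k) = (P k).mulVec x0 := by
    intro k hk
    have hb : blk (τ k) = k := by
      rcases lt_or_eq_of_le hk with hk' | hk'
      · exact hblk (τ k) k hk le_rfl (Or.inl (hτmono (by omega)))
      · exact hblk (τ k) k hk le_rfl (Or.inr hk')
    rw [hxdef]
    simp only [hb, sub_self, zero_smul, NormedSpace.exp_zero, Matrix.one_mulVec]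
  -- the gluing identity
  have hglue : ∀ k : ℕ,
      (NormedSpace.exp ((τ (k + 1) - τ k) • A (j k))).mulVec ((P k).mulVec x0)
        = (P (k + 1)).mulVec x0 := by
    intro k
    have hd : τ (k + 1) - τ k = m + (N k : ℝ) * h := by
      rw [hτdef, markovTime_succ]; ring
    rw [hd, exp_block, Matrix.mulVec_mulVec, hPdef, ← markovProd_succ]
  -- x is a trajectory
  have htraj : IsDwellTrajectory A m x := by
    left
    refine ⟨p - 1, τ, j, hτ0, ?_, ?_, ?_, ?_⟩
    · intro k _
      have : τ (k + 1) = τ k + (m + (N k : ℝ) * h) := by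
        rw [hτdef, markovTime_succ]
      have : 0 ≤ (N k : ℝ) * h := by positivity
      have := markovTime_succ m h N k
      rw [hτdef]
      rw [this]
      linarith
    · intro k hk
      exact hadm k (by omega)
    · intro k hk s hs
      have hk' : k ≤ p - 1 := by omega
      rw [hxτ k hk']
      rcases lt_or_eq_of_le hs.2 with hlt | heq
      · have hb : blk s = k := hblk s k hk' hs.1 (Or.inl hlt)
        rw [hxdef]; simp only [hb]
      · subst heq
        rw [hxτ (k + 1) (by omega), hglue k]
    · intro s hsge
      have hb : blk s = p - 1 := hblk s (p - 1) le_rfl hsge (Or.inr rfl)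
      rw [hxτ (p - 1) le_rfl, hxdef]
      simp only [hb]
  -- initial value
  have hx0 : x 0 = x0 := by
    have := hxτ 0 (Nat.zero_le _)
    rw [hτ0] at this
    rw [this, hPdef, markovProd_zero, Matrix.one_mulVec]
  -- final value
  have hxp : x (τ p) = (P p).mulVec x0 := by
    have hp1 : p - 1 + 1 = p := by omega
    have hb : blk (τ p) = p - 1 := by
      apply hblk (τ p) (p - 1) le_rfl (hτmono.monotone (by omega)) (Or.inr rfl)
    rw [hxdef]
    simp only [hb]
    have hg := hglue (p - 1)
    rw [hp1] at hg
    exact hg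
  have hτp : 0 ≤ τ p := by
    rw [← hτ0]; exact hτmono.monotone (Nat.zero_le _)
  have := hbound x htraj (τ p) hτp
  rw [hx0, hxp] at this
  exact this

lemma markovProd_congr (m h : ℝ) {j j' : ℕ → Fin n} {N N' : ℕ → ℕ} (p : ℕ)
    (hj : ∀ s < p, j s = j' s) (hN : ∀ s < p, N s = N' s) :
    markovProd A m h j N p = markovProd A m h j' N' p := by
  unfold markovProd
  congr 1
  congr 1
  apply List.map_congr_left
  intro s hs
  rw [List.mem_range] at hs
  rw [hj s hs, hN s hs]

lemma markovProd_add (m h : ℝ) (j : ℕ → Fin n) (N : ℕ → ℕ) (a b : ℕ) :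
    markovProd A m h j N (a + b) =
      markovProd A m h (fun s => j (a + s)) (fun s => N (a + s)) b *
        markovProd A m h j N a := by
  unfold markovProd
  rw [List.range_add, List.map_append, List.reverse_append, List.prod_append, List.map_map]
  rfl

lemma markovTime_add (m h : ℝ) (N : ℕ → ℕ) (a b : ℕ) :
    markovTime m h N (a + b) =
      markovTime m h (fun s => N (a + s)) b + markovTime m h N a := by
  induction b with
  | zero => simp [markovTime_zero]
  | succ b ih =>
    rw [← Nat.add_assoc, markovTime_succ, ih, markovTime_succ]
    ring

lemma markovProd_pow (m h : ℝ) (j : ℕ → Fin n) (N : ℕ → ℕ) (p : ℕ) (hp : 0 < p) (k : ℕ) :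
    markovProd A m h (fun s => j (s % p)) (fun s => N (s % p)) (k * p) =
      (markovProd A m h j N p) ^ k := by
  induction k with
  | zero => simp [markovProd_zero]
  | succ k ih =>
    have hmul : (k + 1) * p = k * p + p := by ring
    rw [hmul, markovProd_add, ih, pow_succ']
    congr 1
    apply markovProd_congr
    · intro s hs
      have hmod : (k * p + s) % p = s := by
        rw [Nat.add_comm, Nat.add_mul_mod_self_right, Nat.mod_eq_of_lt hs]
      simp only [hmod]
    · intro s hs
      have hmod : (k * p + s) % p = s := by
        rw [Nat.add_comm, Nat.add_mul_mod_self_right, Nat.mod_eq_of_lt hs]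
      simp only [hmod]

lemma markovTime_pow (m h : ℝ) (N : ℕ → ℕ) (p : ℕ) (k : ℕ) :
    markovTime m h (fun s => N (s % p)) (k * p) = k * markovTime m h N p := by
  induction k with
  | zero => simp [markovTime_zero]
  | succ k ih =>
    have hmul : (k + 1) * p = k * p + p := by ring
    rw [hmul, markovTime_add, ih]
    have : markovTime m h (fun s => N ((k * p + s) % p)) p = markovTime m h N p := by
      unfold markovTime
      apply Finset.sum_congr rfl
      intro s hs
      rw [Finset.mem_range] at hs
      have hmod : (k * p + s) % p = s := by
        rw [Nat.add_comm, Nat.add_mul_mod_self_right, Nat.mod_eq_of_lt hs]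
      simp only [hmod]
    rw [this]
    push_cast
    ring

lemma isNorm_le_const {Nn : (Fin d → ℝ) → ℝ} (hNn : IsNorm Nn) :
    ∃ K : ℝ, 0 < K ∧ ∀ u : Fin d → ℝ, Nn u ≤ K * ‖u‖ := by
  classical
  refine ⟨(∑ i : Fin d, Nn (Pi.single i 1)) + 1, ?_, ?_⟩
  · have : 0 ≤ ∑ i : Fin d, Nn (Pi.single i 1) :=
      Finset.sum_nonneg fun i _ => isNorm_nonneg hNn _
    linarith
  · intro u
    have hdecomp : u = ∑ i : Fin d, u i • (Pi.single i 1 : Fin d → ℝ) := by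
      funext l
      simp only [Finset.sum_apply, Pi.smul_apply, Pi.single_apply, smul_eq_mul,
        mul_ite, mul_one, mul_zero]
      rw [Finset.sum_ite_eq Finset.univ l (fun i => u i)]
      simp
    have hsub : Nn (∑ i : Fin d, u i • (Pi.single i 1 : Fin d → ℝ)) ≤
        ∑ i : Fin d, Nn (u i • (Pi.single i 1 : Fin d → ℝ)) :=
      Finset.le_sum_of_subadditive Nn (isNorm_zero hNn).le hNn.1 _ _
    calc Nn u ≤ ∑ i : Fin d, Nn (u i • (Pi.single i 1 : Fin d → ℝ)) := by
            nth_rewrite 1 [hdecomp]; exact hsub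
      _ = ∑ i : Fin d, |u i| * Nn (Pi.single i 1) := by
            exact Finset.sum_congr rfl fun i _ => hNn.2.1 _ _
      _ ≤ ∑ i : Fin d, ‖u‖ * Nn (Pi.single i 1) := by
            apply Finset.sum_le_sum
            intro i _
            apply mul_le_mul_of_nonneg_right ?_ (isNorm_nonneg hNn _)
            calc |u i| = ‖u i‖ := (Real.norm_eq_abs _).symm
              _ ≤ ‖u‖ := norm_le_pi_norm u i
      _ ≤ ((∑ i : Fin d, Nn (Pi.single i 1)) + 1) * ‖u‖ := by
            rw [← Finset.mul_sum, mul_comm]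
            have h0 : 0 ≤ ‖u‖ := norm_nonneg u
            nlinarith [Finset.sum_nonneg fun (i : Fin d) (_ : i ∈ Finset.univ) =>
              isNorm_nonneg hNn (Pi.single i 1)]

lemma isNorm_continuous {Nn : (Fin d → ℝ) → ℝ} (hNn : IsNorm Nn) : Continuous Nn := by
  obtain ⟨K, hK, hKle⟩ := isNorm_le_const hNn
  have hneg : ∀ u : Fin d → ℝ, Nn (-u) = Nn u := by
    intro u
    have := hNn.2.1 (-1) u; simpa using this
  apply (LipschitzWith.of_dist_le_mul (K := K.toNNReal) ?_).continuous
  intro a b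
  rw [Real.dist_eq, dist_eq_norm, Real.coe_toNNReal K hK.le]
  rw [abs_sub_le_iff]
  constructor
  · have h1 : Nn a ≤ Nn (a - b) + Nn b := by
      have := hNn.1 (a - b) b; simpa using this
    have := hKle (a - b)
    linarith
  · have h1 : Nn b ≤ Nn (b - a) + Nn a := by
      have := hNn.1 (b - a) a; simpa using this
    have h2 : Nn (b - a) = Nn (a - b) := by
      rw [← hneg (a - b)]; congr 1; abel
    have := hKle (a - b)
    linarith

lemma isNorm_ge_const {Nn : (Fin d → ℝ) → ℝ} (hNn : IsNorm Nn) :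
    ∃ ε : ℝ, 0 < ε ∧ ∀ u : Fin d → ℝ, ε * ‖u‖ ≤ Nn u := by
  by_cases hd : ∀ u : Fin d → ℝ, u = 0
  · refine ⟨1, one_pos, fun u => ?_⟩
    rw [hd u, norm_zero, mul_zero, isNorm_zero hNn]
  · push_neg at hd
    obtain ⟨u₀, hu₀⟩ := hd
    have hsne : (Metric.sphere (0 : Fin d → ℝ) 1).Nonempty := by
      refine ⟨‖u₀‖⁻¹ • u₀, ?_⟩
      simp only [Metric.mem_sphere, dist_zero_right, norm_smul, norm_inv, norm_norm]
      rw [inv_mul_cancel₀ (norm_ne_zero_iff.mpr hu₀)]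
    obtain ⟨z, hz, hzmin⟩ := (isCompact_sphere (0 : Fin d → ℝ) 1).exists_isMinOn hsne
      (isNorm_continuous hNn).continuousOn
    have hz1 : ‖z‖ = 1 := by simpa [Metric.mem_sphere, dist_zero_right] using hz
    have hzpos : 0 < Nn z := by
      rcases lt_or_eq_of_le (isNorm_nonneg hNn z) with h | h
      · exact h
      · exfalso
        have : z = 0 := hNn.2.2 z h.symm
        rw [this, norm_zero] at hz1
        norm_num at hz1
    refine ⟨Nn z, hzpos, fun u => ?_⟩
    by_cases hu : u = 0
    · rw [hu, norm_zero, mul_zero, isNorm_zero hNn]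
    · have hnu : (0 : ℝ) < ‖u‖ := norm_pos_iff.mpr hu
      have hmem : ‖u‖⁻¹ • u ∈ Metric.sphere (0 : Fin d → ℝ) 1 := by
        simp only [Metric.mem_sphere, dist_zero_right, norm_smul, norm_inv, norm_norm]
        rw [inv_mul_cancel₀ hnu.ne']
      have := hzmin hmem
      have heq : Nn (‖u‖⁻¹ • u) = ‖u‖⁻¹ * Nn u := by
        rw [hNn.2.1, abs_of_pos (by positivity)]
      have h3 : Nn z ≤ Nn (‖u‖⁻¹ • u) := this
      rw [heq] at h3
      have h4 := mul_le_mul_of_nonneg_left h3 hnu.le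
      rw [← mul_assoc, mul_inv_cancel₀ hnu.ne', one_mul] at h4
      calc Nn z * ‖u‖ = ‖u‖ * Nn z := mul_comm _ _
        _ ≤ Nn u := h4

lemma exists_eigenvector {B : Matrix (Fin d) (Fin d) ℂ} {lam : ℂ}
    (hl : lam ∈ spectrum ℂ B) :
    ∃ v : Fin d → ℂ, v ≠ 0 ∧ B.mulVec v = lam • v := by
  rw [spectrum.mem_iff] at hl
  have hdet : (lam • (1 : Matrix (Fin d) (Fin d) ℂ) - B).det = 0 := by
    by_contra hne
    apply hl
    rw [Algebra.algebraMap_eq_smul_one]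
    exact (Matrix.isUnit_iff_isUnit_det _).mpr (isUnit_iff_ne_zero.mpr hne)
  obtain ⟨v, hv0, hv⟩ := (Matrix.exists_mulVec_eq_zero_iff).mpr hdet
  refine ⟨v, hv0, ?_⟩
  rw [Matrix.sub_mulVec, Matrix.smul_mulVec, Matrix.one_mulVec, sub_eq_zero] at hv
  exact hv.symm

lemma mulVec_pow_eig {B : Matrix (Fin d) (Fin d) ℂ} {lam : ℂ} {v : Fin d → ℂ}
    (hv : B.mulVec v = lam • v) (k : ℕ) : (B ^ k).mulVec v = lam ^ k • v := by
  induction k with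
  | zero => simp
  | succ k ih =>
    rw [pow_succ, ← Matrix.mulVec_mulVec, hv, Matrix.mulVec_smul, ih, smul_smul, pow_succ,
      mul_comm]

lemma re_mulVec (Q : Matrix (Fin d) (Fin d) ℝ) (v : Fin d → ℂ) :
    Q.mulVec (fun l => (v l).re) = fun i => (((Q.map (algebraMap ℝ ℂ)).mulVec v) i).re := by
  funext i
  simp only [Matrix.mulVec, Matrix.map_apply, dotProduct, Complex.re_sum]
  apply Finset.sum_congr rfl
  intro l _
  simp [Complex.mul_re]

lemma im_mulVec (Q : Matrix (Fin d) (Fin d) ℝ) (v : Fin d → ℂ) :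
    Q.mulVec (fun l => (v l).im) = fun i => (((Q.map (algebraMap ℝ ℂ)).mulVec v) i).im := by
  funext i
  simp only [Matrix.mulVec, Matrix.map_apply, dotProduct, Complex.im_sum]
  apply Finset.sum_congr rfl
  intro l _
  simp [Complex.mul_im]

lemma map_pow_complex (Q : Matrix (Fin d) (Fin d) ℝ) (k : ℕ) :
    (Q.map (algebraMap ℝ ℂ)) ^ k = (Q ^ k).map (algebraMap ℝ ℂ) := by
  simp only [← RingHom.mapMatrix_apply, ← map_pow]

end MarkovAux

/-- **Lower bound half of the main theorem.**  If every trajectory of the switched system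
with dwell time at least `m` satisfies `Nn (x t) ≤ C·e^{α t}·Nn (x 0)` for all `t ≥ 0`
(`Nn` a norm on `ℝ^d`, `C ≥ 1`), then every admissible Markovian product `Π` of the
`h`-discretization with total time `T` satisfies `‖Π‖ ≤ C·e^{α T}` in the operator norm
induced by `Nn`; moreover if `Π` is cyclic then `ρ(PP) ≤ e^{α T}`. -/



theorem markov_products_bounded_of_trajectories_bounded {d n : ℕ}
    (A : Fin n → Matrix (Fin d) (Fin d) ℝ) (m h α C : ℝ)
    (hm : 0 < m) (hh : 0 < h) (hC : 1 ≤ C)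
    (Nn : (Fin d → ℝ) → ℝ) (hNn : IsNorm Nn)
    (hbound : ∀ x : ℝ → (Fin d → ℝ), IsDwellTrajectory A m x →
      ∀ s : ℝ, 0 ≤ s → Nn (x s) ≤ C * Real.exp (α * s) * Nn (x 0)) :
    ∀ (p : ℕ), 0 < p → ∀ (j : ℕ → Fin n) (N : ℕ → ℕ),
      (∀ s : ℕ, s + 1 < p → j (s + 1) ≠ j s) →
      opNorm Nn (markovProd A m h j N p) ≤ C * Real.exp (α * markovTime m h N p) ∧
      ((p = 1 ∨ j (p - 1) ≠ j 0) →
        spectralRadius ℂ ((markovProd A m h j N p).map (algebraMap ℝ ℂ)) ≤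
          ENNReal.ofReal (Real.exp (α * markovTime m h N p))) := by
  classical
  intro p hp j N hadm
  obtain ⟨ε, hε, hεle⟩ := MarkovAux.isNorm_ge_const hNn
  have hC0 : (0 : ℝ) < C := lt_of_lt_of_le one_pos hC
  set PP := markovProd A m h j N p with hPP
  set T := markovTime m h N p with hT
  set R := Real.exp (α * T) with hR
  have hR0 : 0 < R := Real.exp_pos _
  have hvb := MarkovAux.vec_bound A m h α C hm hh Nn hNn hbound p hp j N hadm
  constructor
  · -- operator norm bound
    apply csSup_le
    · exact ⟨Nn (PP.mulVec 0), 0, by simp [MarkovAux.isNorm_zero hNn], rfl⟩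
    · rintro r ⟨x0, hx0, rfl⟩
      calc Nn (PP.mulVec x0) ≤ C * R * Nn x0 := hvb x0
        _ ≤ C * R * 1 := mul_le_mul_of_nonneg_left hx0 (by positivity)
        _ = C * R := mul_one _
  · intro hcyc
    -- bound on powers of Π
    have hpow : ∀ k : ℕ, 0 < k → ∀ x0 : Fin d → ℝ,
        Nn ((PP ^ k).mulVec x0) ≤ C * R ^ k * Nn x0 := by
      intro k hk x0
      rcases hcyc with hp1 | hne
      · -- single mode: use a switch-free trajectory
        subst hp1
        set B := A (j 0) with hB
        set t1 : ℝ := m + (N 0 : ℝ) * h with ht1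
        have ht1pos : 0 < t1 := by positivity
        have hT1 : T = t1 := by
          rw [hT, markovTime, Finset.sum_range_one]
        have hPP1 : PP = NormedSpace.exp (t1 • B) := by
          rw [hPP, MarkovAux.markovProd_succ, MarkovAux.markovProd_zero, mul_one,
            MarkovAux.exp_block]
        have hPPk : PP ^ k = NormedSpace.exp (((k : ℝ) * t1) • B) := by
          rw [hPP1, ← Matrix.exp_nsmul, ← Nat.cast_smul_eq_nsmul ℝ k (t1 • B), smul_smul]
        set x : ℝ → Fin d → ℝ := fun s => (NormedSpace.exp (s • B)).mulVec x0 with hx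
        have hx0' : x 0 = x0 := by
          rw [hx]; simp [NormedSpace.exp_zero, Matrix.one_mulVec]
        have htraj : IsDwellTrajectory A m x := by
          left
          refine ⟨0, fun _ => 0, fun _ => j 0, rfl, by omega, by omega, by omega, ?_⟩
          intro s _
          rw [hx0', sub_zero]
        have hb := hbound x htraj ((k : ℝ) * t1) (by positivity)
        rw [hx0'] at hb
        have hxval : x ((k : ℝ) * t1) = (PP ^ k).mulVec x0 := by
          rw [hPPk]
        rw [hxval] at hb
        calc Nn ((PP ^ k).mulVec x0) ≤ C * Real.exp (α * ((k : ℝ) * t1)) * Nn x0 := hb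
          _ = C * R ^ k * Nn x0 := by
              rw [hR, hT1, ← Real.exp_nat_mul]
              ring_nf
      · -- cyclic with p ≥ 2: periodic extension
        have hp2 : 2 ≤ p := by
          rcases Nat.lt_or_ge p 2 with h2 | h2
          · exfalso
            have hp1 : p = 1 := by omega
            rw [hp1] at hne
            simp at hne
          · exact h2
        set j' : ℕ → Fin n := fun s => j (s % p) with hj'
        set N' : ℕ → ℕ := fun s => N (s % p) with hN'
        have hadm' : ∀ s : ℕ, s + 1 < k * p → j' (s + 1) ≠ j' s := by
          intro s _
          have hrlt : s % p < p := Nat.mod_lt _ (by omega)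
          have h1 : (s + 1) % p = (s % p + 1) % p := by
            conv_lhs => rw [Nat.add_mod]
            rw [Nat.mod_eq_of_lt (show 1 < p by omega)]
          rcases Nat.lt_or_ge (s % p + 1) p with hlt | hge
          · have : (s % p + 1) % p = s % p + 1 := Nat.mod_eq_of_lt hlt
            rw [hj']
            simp only []
            rw [h1, this]
            exact hadm (s % p) hlt
          · have hpe : s % p + 1 = p := by omega
            have : (s % p + 1) % p = 0 := by rw [hpe, Nat.mod_self]
            rw [hj']
            simp only []
            rw [h1, this]
            have hse : s % p = p - 1 := by omega
            rw [hse]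
            exact hne.symm
        have hkp : 0 < k * p := by positivity
        have hvb' := MarkovAux.vec_bound A m h α C hm hh Nn hNn hbound (k * p) hkp
          j' N' hadm' x0
        rw [MarkovAux.markovProd_pow A m h j N p (by omega) k,
          MarkovAux.markovTime_pow m h N p k] at hvb'
        calc Nn ((PP ^ k).mulVec x0) ≤ C * Real.exp (α * ((k : ℝ) * T)) * Nn x0 := hvb'
          _ = C * R ^ k * Nn x0 := by
              rw [hR, ← Real.exp_nat_mul]
              ring_nf
    -- spectral radius bound via eigenvectors
    refine iSup₂_le fun lam hlam => ?_
    have key : ‖lam‖ ≤ R := by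
      obtain ⟨v, hv0, hv⟩ := MarkovAux.exists_eigenvector hlam
      obtain ⟨i, hvi⟩ := Function.ne_iff.mp hv0
      have hvi' : v i ≠ 0 := hvi
      have hvipos : 0 < ‖v i‖ := norm_pos_iff.mpr hvi'
      set a : Fin d → ℝ := fun l => (v l).re with ha
      set b : Fin d → ℝ := fun l => (v l).im with hb
      set D : ℝ := ε⁻¹ * (C * (Nn a + Nn b)) with hD
      have hbk : ∀ k : ℕ, 0 < k → ‖lam‖ ^ k * ‖v i‖ ≤ D * R ^ k := by
        intro k hk
        have heig : ((PP ^ k).map (algebraMap ℝ ℂ)).mulVec v = lam ^ k • v := by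
          rw [← MarkovAux.map_pow_complex, MarkovAux.mulVec_pow_eig hv]
        have h1 : (PP ^ k).mulVec a = fun i' => (lam ^ k * v i').re := by
          rw [ha, MarkovAux.re_mulVec (PP ^ k) v, heig]
          funext i'
          simp
        have h2 : (PP ^ k).mulVec b = fun i' => (lam ^ k * v i').im := by
          rw [hb, MarkovAux.im_mulVec (PP ^ k) v, heig]
          funext i'
          simp
        have coordRe : |(lam ^ k * v i).re| ≤ ε⁻¹ * (C * R ^ k * Nn a) := by
          have e1 : (lam ^ k * v i).re = ((PP ^ k).mulVec a) i := by rw [h1]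
          rw [e1]
          have e2 : |((PP ^ k).mulVec a) i| ≤ ‖(PP ^ k).mulVec a‖ := by
            rw [← Real.norm_eq_abs]; exact norm_le_pi_norm _ i
          have e3 : ε * ‖(PP ^ k).mulVec a‖ ≤ Nn ((PP ^ k).mulVec a) := hεle _
          have e4 : Nn ((PP ^ k).mulVec a) ≤ C * R ^ k * Nn a := hpow k hk a
          calc |((PP ^ k).mulVec a) i| ≤ ‖(PP ^ k).mulVec a‖ := e2
            _ ≤ ε⁻¹ * Nn ((PP ^ k).mulVec a) := (le_inv_mul_iff₀ hε).mpr e3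
            _ ≤ ε⁻¹ * (C * R ^ k * Nn a) :=
                mul_le_mul_of_nonneg_left e4 (by positivity)
        have coordIm : |(lam ^ k * v i).im| ≤ ε⁻¹ * (C * R ^ k * Nn b) := by
          have e1 : (lam ^ k * v i).im = ((PP ^ k).mulVec b) i := by rw [h2]
          rw [e1]
          have e2 : |((PP ^ k).mulVec b) i| ≤ ‖(PP ^ k).mulVec b‖ := by
            rw [← Real.norm_eq_abs]; exact norm_le_pi_norm _ i
          have e3 : ε * ‖(PP ^ k).mulVec b‖ ≤ Nn ((PP ^ k).mulVec b) := hεle _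
          have e4 : Nn ((PP ^ k).mulVec b) ≤ C * R ^ k * Nn b := hpow k hk b
          calc |((PP ^ k).mulVec b) i| ≤ ‖(PP ^ k).mulVec b‖ := e2
            _ ≤ ε⁻¹ * Nn ((PP ^ k).mulVec b) := (le_inv_mul_iff₀ hε).mpr e3
            _ ≤ ε⁻¹ * (C * R ^ k * Nn b) :=
                mul_le_mul_of_nonneg_left e4 (by positivity)
        calc ‖lam‖ ^ k * ‖v i‖ = ‖lam ^ k * v i‖ := by rw [norm_mul, norm_pow]
          _ ≤ |(lam ^ k * v i).re| + |(lam ^ k * v i).im| := by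
              exact Complex.norm_le_abs_re_add_abs_im _
          _ ≤ ε⁻¹ * (C * R ^ k * Nn a) + ε⁻¹ * (C * R ^ k * Nn b) :=
              add_le_add coordRe coordIm
          _ = D * R ^ k := by rw [hD]; ring
      by_contra hgt
      push_neg at hgt
      set q : ℝ := ‖lam‖ / R with hq
      have hq1 : 1 < q := (one_lt_div hR0).mpr hgt
      obtain ⟨k, hk⟩ := pow_unbounded_of_one_lt (D / ‖v i‖) hq1
      have hmono : q ^ k ≤ q ^ (k + 1) := pow_le_pow_right₀ hq1.le (Nat.le_succ k)
      have hstep := hbk (k + 1) (Nat.succ_pos k)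
      have hlampow : ‖lam‖ ^ (k + 1) = q ^ (k + 1) * R ^ (k + 1) := by
        rw [hq, div_pow, div_mul_cancel₀]
        positivity
      rw [hlampow] at hstep
      have hRk : (0 : ℝ) < R ^ (k + 1) := by positivity
      have hq2 : q ^ (k + 1) * ‖v i‖ ≤ D := by
        have := hstep
        nlinarith
      have hq3 : q ^ (k + 1) ≤ D / ‖v i‖ := (le_div_iff₀ hvipos).mpr hq2
      have : D / ‖v i‖ < D / ‖v i‖ := lt_of_lt_of_le (lt_of_lt_of_le hk hmono) hq3
      exact lt_irrefl _ this
    calc (‖lam‖₊ : ℝ≥0∞) = ENNReal.ofReal ‖lam‖ := (ofReal_norm lam).symm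
      _ ≤ ENNReal.ofReal R := ENNReal.ofReal_le_ofReal key
end
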